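/- arXiv:1304.0060 — 4 statements merged into one kernel-verified Lean document; each statement's English description precedes it below -/
import Mathlib

section
/- Let E be a trace-preserving completely positive map and A an operator with E(A) = A. Write A = (X₊ − X₋) + i(Y₊ − Y₋), where X₊, X₋, Y₊, Y₋ are positive semidefinite with supp(X₊) ⊥ supp(X₋) and supp(Y₊) ⊥ supp(Y₋) (the Jordan decompositions of the Hermitian and anti-Hermitian parts of A). Then X₊, X₋, Y₊, Y₋ are all fixed points of E. -/
open Matrix Filter Topology
open scoped ComplexOrder

/-- The matrix of the orthogonal projection onto a subspace `X`. -/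
noncomputable def projMat {d : ℕ} (X : Submodule ℂ (EuclideanSpace ℂ (Fin d))) :
    Matrix (Fin d) (Fin d) ℂ :=
  Matrix.toEuclideanLin.symm ((X.subtypeL.comp X.orthogonalProjectionOnto).toLinearMap)

/-- The support of an operator: the range of the associated linear map. -/
noncomputable def matSupp {d : ℕ} (A : Matrix (Fin d) (Fin d) ℂ) :
    Submodule ℂ (EuclideanSpace ℂ (Fin d)) :=
  LinearMap.range (Matrix.toEuclideanLin A)

/-- The outer product `|v⟩⟨v|`. -/
noncomputable def outer {d : ℕ} (v : EuclideanSpace ℂ (Fin d)) : Matrix (Fin d) (Fin d) ℂ :=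
  fun i j => v i * star (v j)

/-- The completely positive map `A ↦ ∑ i, E i * A * (E i)†` given by Kraus operators `E`. -/
noncomputable def krausMap {d m : ℕ} (E : Fin m → Matrix (Fin d) (Fin d) ℂ)
    (A : Matrix (Fin d) (Fin d) ℂ) : Matrix (Fin d) (Fin d) ℂ :=
  ∑ i, E i * A * (E i)ᴴ

section Helpers

variable {d m : ℕ}

lemma toEL_mul (M N : Matrix (Fin d) (Fin d) ℂ) :
    Matrix.toEuclideanLin (M * N) =
      (Matrix.toEuclideanLin M).comp (Matrix.toEuclideanLin N) := by
  rw [Matrix.toEuclideanLin_eq_toLin,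
    Matrix.toLin_mul (PiLp.basisFun 2 ℂ (Fin d)) (PiLp.basisFun 2 ℂ (Fin d))
      (PiLp.basisFun 2 ℂ (Fin d))]

lemma toEL_projMat {U : Submodule ℂ (EuclideanSpace ℂ (Fin d))} :
    Matrix.toEuclideanLin (projMat U) =
      (U.subtypeL.comp U.orthogonalProjectionOnto).toLinearMap := by
  simp [projMat]

lemma projMat_mul_self_of_range_le {U : Submodule ℂ (EuclideanSpace ℂ (Fin d))}
    {M : Matrix (Fin d) (Fin d) ℂ}
    (h : LinearMap.range (Matrix.toEuclideanLin M) ≤ U) : projMat U * M = M := by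
  apply Matrix.toEuclideanLin.injective
  rw [toEL_mul, toEL_projMat]
  refine LinearMap.ext fun v => ?_
  simp only [LinearMap.coe_comp, Function.comp_apply, ContinuousLinearMap.coe_coe,
    ContinuousLinearMap.comp_apply, Submodule.coe_subtypeL', Submodule.coe_subtype]
  exact Submodule.starProjection_eq_self_iff.2 (h ⟨v, rfl⟩)

lemma projMat_mul_zero_of_range_le {U : Submodule ℂ (EuclideanSpace ℂ (Fin d))}
    {M : Matrix (Fin d) (Fin d) ℂ}
    (h : LinearMap.range (Matrix.toEuclideanLin M) ≤ Uᗮ) : projMat U * M = 0 := by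
  apply Matrix.toEuclideanLin.injective
  rw [toEL_mul, toEL_projMat]
  refine LinearMap.ext fun v => ?_
  simp only [LinearMap.coe_comp, Function.comp_apply, ContinuousLinearMap.coe_coe,
    ContinuousLinearMap.comp_apply, map_zero, LinearMap.zero_apply]
  rw [Submodule.orthogonalProjectionOnto_apply_of_mem_orthogonal (h ⟨v, rfl⟩)]
  simp

lemma projMat_isHermitian (U : Submodule ℂ (EuclideanSpace ℂ (Fin d))) :
    (projMat U).IsHermitian := by
  rw [Matrix.isHermitian_iff_isSymmetric, toEL_projMat]
  exact U.starProjection_isSymmetric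

lemma projMat_idem (U : Submodule ℂ (EuclideanSpace ℂ (Fin d))) :
    projMat U * projMat U = projMat U := by
  apply projMat_mul_self_of_range_le
  rintro x ⟨v, rfl⟩
  rw [toEL_projMat]
  exact (U.orthogonalProjectionOnto v).2

lemma projMat_posSemidef (U : Submodule ℂ (EuclideanSpace ℂ (Fin d))) :
    (projMat U).PosSemidef := by
  have := Matrix.posSemidef_conjTranspose_mul_self (projMat U)
  rwa [(projMat_isHermitian U).eq, projMat_idem U] at this

lemma one_sub_projMat_posSemidef (U : Submodule ℂ (EuclideanSpace ℂ (Fin d))) :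
    (1 - projMat U).PosSemidef := by
  have := Matrix.posSemidef_conjTranspose_mul_self (1 - projMat U)
  have h : (1 - projMat U)ᴴ * (1 - projMat U) = 1 - projMat U := by
    rw [conjTranspose_sub, conjTranspose_one, (projMat_isHermitian U).eq]
    rw [sub_mul, one_mul, mul_sub, mul_one, projMat_idem U, sub_self, sub_zero]
  rwa [h] at this

lemma trace_ctms_nonneg (A : Matrix (Fin d) (Fin d) ℂ) : 0 ≤ (Aᴴ * A).trace := by
  rw [Matrix.trace]
  apply Finset.sum_nonneg
  intro j _
  rw [Matrix.diag_apply, Matrix.mul_apply]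
  apply Finset.sum_nonneg
  intro i _
  simp only [Matrix.conjTranspose_apply]
  exact star_mul_self_nonneg _

lemma trace_ctms_eq_zero {A : Matrix (Fin d) (Fin d) ℂ} (h : (Aᴴ * A).trace = 0) : A = 0 := by
  ext i j
  have hsum : ∀ k ∈ Finset.univ, (0:ℂ) ≤ (Aᴴ * A) k k := fun k _ => by
    rw [Matrix.mul_apply]
    apply Finset.sum_nonneg
    intro i _
    simp only [Matrix.conjTranspose_apply]
    exact star_mul_self_nonneg _
  have hdiag : (Aᴴ * A) j j = 0 :=
    (Finset.sum_eq_zero_iff_of_nonneg hsum).1 h j (Finset.mem_univ j)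
  rw [Matrix.mul_apply] at hdiag
  have hterm : ∀ k ∈ Finset.univ, (0:ℂ) ≤ Aᴴ j k * A k j := fun k _ => by
    simp only [Matrix.conjTranspose_apply]; exact star_mul_self_nonneg _
  have := (Finset.sum_eq_zero_iff_of_nonneg hterm).1 hdiag i (Finset.mem_univ i)
  simp only [Matrix.conjTranspose_apply] at this
  simp only [Matrix.zero_apply]
  rcases mul_eq_zero.1 this with h' | h'
  · exact star_eq_zero.1 h'
  · exact h'

open scoped MatrixOrder in
lemma psd_trace_mul_nonneg {M N : Matrix (Fin d) (Fin d) ℂ}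
    (hM : M.PosSemidef) (hN : N.PosSemidef) : 0 ≤ (M * N).trace := by
  obtain ⟨B, hB⟩ : ∃ B : Matrix (Fin d) (Fin d) ℂ, M = Bᴴ * B :=
    CStarAlgebra.nonneg_iff_eq_star_mul_self.mp (Matrix.nonneg_iff_posSemidef.mpr hM)
  obtain ⟨C, hC⟩ : ∃ C : Matrix (Fin d) (Fin d) ℂ, N = Cᴴ * C :=
    CStarAlgebra.nonneg_iff_eq_star_mul_self.mp (Matrix.nonneg_iff_posSemidef.mpr hN)
  have key : (M * N).trace = ((B * Cᴴ)ᴴ * (B * Cᴴ)).trace := by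
    rw [hB, hC]
    rw [show Bᴴ * B * (Cᴴ * C) = (Bᴴ * (B * Cᴴ)) * C by simp [Matrix.mul_assoc]]
    rw [Matrix.trace_mul_comm]
    simp [Matrix.conjTranspose_mul, Matrix.mul_assoc]
  rw [key]
  exact trace_ctms_nonneg _

open scoped MatrixOrder in
lemma psd_trace_mul_eq_zero {M N : Matrix (Fin d) (Fin d) ℂ}
    (hM : M.PosSemidef) (hN : N.PosSemidef) (h : (M * N).trace = 0) : M * N = 0 := by
  obtain ⟨B, hB⟩ : ∃ B : Matrix (Fin d) (Fin d) ℂ, M = Bᴴ * B :=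
    CStarAlgebra.nonneg_iff_eq_star_mul_self.mp (Matrix.nonneg_iff_posSemidef.mpr hM)
  obtain ⟨C, hC⟩ : ∃ C : Matrix (Fin d) (Fin d) ℂ, N = Cᴴ * C :=
    CStarAlgebra.nonneg_iff_eq_star_mul_self.mp (Matrix.nonneg_iff_posSemidef.mpr hN)
  have key : (M * N).trace = ((B * Cᴴ)ᴴ * (B * Cᴴ)).trace := by
    rw [hB, hC]
    rw [show Bᴴ * B * (Cᴴ * C) = (Bᴴ * (B * Cᴴ)) * C by simp [Matrix.mul_assoc]]
    rw [Matrix.trace_mul_comm]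
    simp [Matrix.conjTranspose_mul, Matrix.mul_assoc]
  rw [key] at h
  have hz : B * Cᴴ = 0 := trace_ctms_eq_zero h
  rw [hB, hC]
  calc Bᴴ * B * (Cᴴ * C) = Bᴴ * (B * Cᴴ) * C := by
        rw [Matrix.mul_assoc, Matrix.mul_assoc, Matrix.mul_assoc]
      _ = 0 := by rw [hz, Matrix.mul_zero, Matrix.zero_mul]

variable (E : Fin m → Matrix (Fin d) (Fin d) ℂ)

lemma kraus_add (M N : Matrix (Fin d) (Fin d) ℂ) :
    krausMap E (M + N) = krausMap E M + krausMap E N := by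
  simp [krausMap, Matrix.mul_add, Matrix.add_mul, Finset.sum_add_distrib]

lemma kraus_sub (M N : Matrix (Fin d) (Fin d) ℂ) :
    krausMap E (M - N) = krausMap E M - krausMap E N := by
  simp [krausMap, Matrix.mul_sub, Matrix.sub_mul, Finset.sum_sub_distrib]

lemma kraus_smul (c : ℂ) (M : Matrix (Fin d) (Fin d) ℂ) :
    krausMap E (c • M) = c • krausMap E M := by
  simp [krausMap, Matrix.mul_smul, Matrix.smul_mul, Finset.smul_sum]

lemma kraus_conjTranspose (M : Matrix (Fin d) (Fin d) ℂ) :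
    krausMap E Mᴴ = (krausMap E M)ᴴ := by
  rw [krausMap, krausMap, Matrix.conjTranspose_sum]
  apply Finset.sum_congr rfl
  intro i _
  rw [Matrix.conjTranspose_mul, Matrix.conjTranspose_mul, Matrix.conjTranspose_conjTranspose,
    Matrix.mul_assoc]

lemma kraus_trace (hE : ∑ i, (E i)ᴴ * E i = 1) (M : Matrix (Fin d) (Fin d) ℂ) :
    (krausMap E M).trace = M.trace := by
  rw [krausMap, Matrix.trace_sum]
  have : ∀ i, (E i * M * (E i)ᴴ).trace = ((E i)ᴴ * E i * M).trace := fun i => by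
    rw [Matrix.trace_mul_cycle, Matrix.mul_assoc]
  rw [Finset.sum_congr rfl fun i _ => this i, ← Matrix.trace_sum, ← Finset.sum_mul, hE,
    Matrix.one_mul]

lemma psd_add {M N : Matrix (Fin d) (Fin d) ℂ} (hM : M.PosSemidef) (hN : N.PosSemidef) :
    (M + N).PosSemidef :=
  hM.add hN

lemma psd_zero : (0 : Matrix (Fin d) (Fin d) ℂ).PosSemidef :=
  ⟨isHermitian_zero, fun x => by simp⟩

lemma kraus_psd {M : Matrix (Fin d) (Fin d) ℂ} (hM : M.PosSemidef) :
    (krausMap E M).PosSemidef := by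
  rw [krausMap]
  refine Finset.sum_induction _ (fun N : Matrix (Fin d) (Fin d) ℂ => N.PosSemidef)
    (fun a b ha hb => psd_add ha hb) psd_zero
    (fun i _ => hM.mul_mul_conjTranspose_same (E i))

/-- The key lemma: the positive/negative parts of a hermitian fixed point are fixed. -/
lemma kraus_jordan_fixed (hE : ∑ i, (E i)ᴴ * E i = 1)
    {Xp Xm : Matrix (Fin d) (Fin d) ℂ} (hXp : Xp.PosSemidef) (hXm : Xm.PosSemidef)
    (horth : ∀ x ∈ matSupp Xp, ∀ y ∈ matSupp Xm, inner ℂ x y = (0 : ℂ))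
    (hfix : krausMap E (Xp - Xm) = Xp - Xm) :
    krausMap E Xp = Xp ∧ krausMap E Xm = Xm := by
  set P := projMat (matSupp Xp) with hPdef
  have hPXp : P * Xp = Xp := projMat_mul_self_of_range_le le_rfl
  have hXmle : LinearMap.range (Matrix.toEuclideanLin Xm) ≤ (matSupp Xp)ᗮ := by
    intro y hy
    exact (Submodule.mem_orthogonal _ y).2 fun u hu => horth u hu y hy
  have hPXm : P * Xm = 0 := projMat_mul_zero_of_range_le hXmle
  have hXmP : Xm * P = 0 := by
    have := congrArg Matrix.conjTranspose hPXm
    rwa [Matrix.conjTranspose_mul, (projMat_isHermitian _).eq, hXm.1.eq,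
      Matrix.conjTranspose_zero] at this
  have hXpP : Xp * P = Xp := by
    have := congrArg Matrix.conjTranspose hPXp
    rwa [Matrix.conjTranspose_mul, (projMat_isHermitian _).eq, hXp.1.eq] at this
  have hQXp : (krausMap E Xp).PosSemidef := kraus_psd E hXp
  have hQXm : (krausMap E Xm).PosSemidef := kraus_psd E hXm
  have hQ : krausMap E Xp - krausMap E Xm = Xp - Xm := by
    rw [← kraus_sub, hfix]
  have htr : (krausMap E Xp).trace = Xp.trace := kraus_trace E hE Xp
  -- trace identities
  have h1 : (P * krausMap E Xp).trace - (P * krausMap E Xm).trace = Xp.trace := by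
    rw [← Matrix.trace_sub, ← Matrix.mul_sub, hQ, Matrix.mul_sub, Matrix.trace_sub,
      hPXp, hPXm, Matrix.trace_zero, sub_zero]
  have h2 : (P * krausMap E Xp).trace + ((1 - P) * krausMap E Xp).trace = Xp.trace := by
    rw [← Matrix.trace_add, ← Matrix.add_mul]
    simp only [add_sub_cancel, Matrix.one_mul]
    exact htr
  have ht2 : (0:ℂ) ≤ (P * krausMap E Xm).trace :=
    psd_trace_mul_nonneg (projMat_posSemidef _) hQXm
  have hs : (0:ℂ) ≤ ((1 - P) * krausMap E Xp).trace :=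
    psd_trace_mul_nonneg (one_sub_projMat_posSemidef _) hQXp
  have hsum0 : (P * krausMap E Xm).trace + ((1 - P) * krausMap E Xp).trace = 0 := by
    have := h1
    linear_combination h2 - h1
  have ht2z : (P * krausMap E Xm).trace = 0 := by
    have hle : (P * krausMap E Xm).trace ≤ 0 := by
      calc (P * krausMap E Xm).trace
          ≤ (P * krausMap E Xm).trace + ((1 - P) * krausMap E Xp).trace :=
            le_add_of_nonneg_right hs
        _ = 0 := hsum0
    exact le_antisymm hle ht2
  have hsz : ((1 - P) * krausMap E Xp).trace = 0 := by
    have := hsum0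
    rw [ht2z, zero_add] at this
    exact this
  have hPQXm : P * krausMap E Xm = 0 :=
    psd_trace_mul_eq_zero (projMat_posSemidef _) hQXm ht2z
  have h1PQXp : (1 - P) * krausMap E Xp = 0 :=
    psd_trace_mul_eq_zero (one_sub_projMat_posSemidef _) hQXp hsz
  have hPQXp : P * krausMap E Xp = krausMap E Xp := by
    have h' : krausMap E Xp - P * krausMap E Xp = 0 := by
      rwa [Matrix.sub_mul, Matrix.one_mul] at h1PQXp
    exact (sub_eq_zero.1 h').symm
  have hQXpP : krausMap E Xp * P = krausMap E Xp := by
    have := congrArg Matrix.conjTranspose hPQXp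
    rwa [Matrix.conjTranspose_mul, (projMat_isHermitian _).eq, hQXp.1.eq] at this
  have hQXmP : krausMap E Xm * P = 0 := by
    have := congrArg Matrix.conjTranspose hPQXm
    rwa [Matrix.conjTranspose_mul, (projMat_isHermitian _).eq, hQXm.1.eq,
      Matrix.conjTranspose_zero] at this
  have hXpfix : krausMap E Xp = Xp := by
    have := congrArg (fun M => M * P) hQ
    simpa [Matrix.sub_mul, hQXpP, hQXmP, hXpP, hXmP] using this
  refine ⟨hXpfix, ?_⟩
  have : krausMap E Xm = krausMap E Xp - (Xp - Xm) := by
    rw [eq_sub_iff_add_eq, ← eq_sub_iff_add_eq', ← hQ]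
  rw [this, hXpfix]
  abel

end Helpers

/-- The positive parts of the Jordan decomposition of a fixed point of a
trace-preserving CP map are themselves fixed points. -/
theorem stmt5 {d m : ℕ} (E : Fin m → Matrix (Fin d) (Fin d) ℂ)
    (hE : ∑ i, (E i)ᴴ * E i = 1)
    (A Xp Xm Yp Ym : Matrix (Fin d) (Fin d) ℂ)
    (hA : krausMap E A = A)
    (hXp : Xp.PosSemidef) (hXm : Xm.PosSemidef) (hYp : Yp.PosSemidef) (hYm : Ym.PosSemidef)
    (hXorth : ∀ x ∈ matSupp Xp, ∀ y ∈ matSupp Xm, inner ℂ x y = (0 : ℂ))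
    (hYorth : ∀ x ∈ matSupp Yp, ∀ y ∈ matSupp Ym, inner ℂ x y = (0 : ℂ))
    (hdec : A = (Xp - Xm) + Complex.I • (Yp - Ym)) :
    krausMap E Xp = Xp ∧ krausMap E Xm = Xm ∧ krausMap E Yp = Yp ∧ krausMap E Ym = Ym := by
  have hAH : Aᴴ = (Xp - Xm) - Complex.I • (Yp - Ym) := by
    rw [hdec, Matrix.conjTranspose_add, Matrix.conjTranspose_smul,
      Matrix.conjTranspose_sub, Matrix.conjTranspose_sub, hXp.1.eq, hXm.1.eq, hYp.1.eq,
      hYm.1.eq]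
    rw [show star Complex.I = -Complex.I by simp [Complex.conj_I]]
    rw [neg_smul, ← sub_eq_add_neg]
  have hQAH : krausMap E Aᴴ = Aᴴ := by rw [kraus_conjTranspose, hA]
  have hXeq : Xp - Xm = (2⁻¹ : ℂ) • (A + Aᴴ) := by
    rw [hAH, hdec]
    module
  have hsub : A - Aᴴ = ((2 : ℂ) * Complex.I) • (Yp - Ym) := by
    rw [hAH, hdec]
    module
  have hYeq : Yp - Ym = (-(2⁻¹ : ℂ) * Complex.I) • (A - Aᴴ) := by
    rw [hsub, smul_smul]
    rw [show (-(2⁻¹ : ℂ) * Complex.I) * ((2 : ℂ) * Complex.I) = 1 by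
      have := Complex.I_mul_I
      ring_nf
      rw [Complex.I_sq]
      norm_num]
    rw [one_smul]
  have hQX : krausMap E (Xp - Xm) = Xp - Xm := by
    rw [hXeq, kraus_smul, kraus_add, hA, hQAH]
  have hQY : krausMap E (Yp - Ym) = Yp - Ym := by
    rw [hYeq, kraus_smul, kraus_sub, hA, hQAH]
  obtain ⟨hX1, hX2⟩ := kraus_jordan_fixed E hE hXp hXm hXorth hQX
  obtain ⟨hY1, hY2⟩ := kraus_jordan_fixed E hE hYp hYm hYorth hQY
  exact ⟨hX1, hX2, hY1, hY2⟩
end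

section
/- If X and Y are two BSCCs of a quantum Markov chain (H, E) with dim X ≠ dim Y, then X and Y are orthogonal subspaces. -/
open Matrix Filter Topology
open scoped ComplexOrder

/-- The reachable space of a state `ρ`: the join of the supports of all iterates. -/
noncomputable def Reach {d m : ℕ} (E : Fin m → Matrix (Fin d) (Fin d) ℂ)
    (ρ : Matrix (Fin d) (Fin d) ℂ) : Submodule ℂ (EuclideanSpace ℂ (Fin d)) :=
  ⨆ n : ℕ, matSupp ((krausMap E)^[n] ρ)

/-- A BSCC: a nonzero invariant subspace `B` such that the reachable space of every
nonzero vector of `B` is exactly `B`. -/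
noncomputable def IsBSCC {d m : ℕ} (E : Fin m → Matrix (Fin d) (Fin d) ℂ)
    (B : Submodule ℂ (EuclideanSpace ℂ (Fin d))) : Prop :=
  B ≠ ⊥ ∧
  (∀ ρ : Matrix (Fin d) (Fin d) ℂ, ρ.PosSemidef → matSupp ρ ≤ B →
      matSupp (krausMap E ρ) ≤ B) ∧
  (∀ v : EuclideanSpace ℂ (Fin d), v ∈ B → v ≠ 0 → Reach E (outer v) = B)


namespace Aux

variable {d : ℕ}

noncomputable abbrev ι : (Fin d → ℂ) ≃ₗ[ℂ] EuclideanSpace ℂ (Fin d) :=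
  (WithLp.linearEquiv 2 ℂ (Fin d → ℂ)).symm

lemma sum_mulVec' {m : ℕ} (T : Fin m → Matrix (Fin d) (Fin d) ℂ) (u : Fin d → ℂ) :
    (∑ i, T i) *ᵥ u = ∑ i, T i *ᵥ u :=
  map_sum (Matrix.mulVec.addMonoidHomLeft u) _ _

lemma psd_sum {m : ℕ} {T : Fin m → Matrix (Fin d) (Fin d) ℂ} (hT : ∀ i, (T i).PosSemidef) :
    (∑ i, T i).PosSemidef :=
  Finset.sum_induction T Matrix.PosSemidef (fun _ _ ha hb => ha.add hb)
    Matrix.PosSemidef.zero (fun i _ => hT i)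

lemma dotProduct_sum' {m : ℕ} (v : Fin d → ℂ) (f : Fin m → Fin d → ℂ) :
    dotProduct v (∑ i, f i) = ∑ i, dotProduct v (f i) := by
  simp only [dotProduct, Finset.sum_apply, Finset.mul_sum]
  rw [Finset.sum_comm]

lemma tEL_apply (A : Matrix (Fin d) (Fin d) ℂ) (v : EuclideanSpace ℂ (Fin d)) :
    Matrix.toEuclideanLin A v = ι (A *ᵥ ι.symm v) := rfl

lemma inner_eq0 (x y : EuclideanSpace ℂ (Fin d)) :
    (inner ℂ x y : ℂ) = dotProduct (star (ι.symm x)) (ι.symm y) := by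
  simp [PiLp.inner_apply, dotProduct, mul_comm]

lemma mem_matSupp {A : Matrix (Fin d) (Fin d) ℂ} {v : EuclideanSpace ℂ (Fin d)} :
    v ∈ matSupp A ↔ ∃ u : Fin d → ℂ, ι (A *ᵥ u) = v := by
  constructor
  · rintro ⟨u, rfl⟩; exact ⟨ι.symm u, rfl⟩
  · rintro ⟨u, rfl⟩; exact ⟨ι u, rfl⟩

lemma matSupp_le_iff {A : Matrix (Fin d) (Fin d) ℂ} {W : Submodule ℂ (EuclideanSpace ℂ (Fin d))} :
    matSupp A ≤ W ↔ ∀ u : Fin d → ℂ, ι (A *ᵥ u) ∈ W := by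
  constructor
  · intro h u; exact h (mem_matSupp.2 ⟨u, rfl⟩)
  · rintro h v hv; rcases mem_matSupp.1 hv with ⟨u, rfl⟩; exact h u

/-- general orthogonal-of-range lemma -/
lemma mem_matSupp_orth' {A : Matrix (Fin d) (Fin d) ℂ} {v : EuclideanSpace ℂ (Fin d)} :
    v ∈ (matSupp A)ᗮ ↔ Aᴴ *ᵥ ι.symm v = 0 := by
  constructor
  · intro h
    ext i
    have h3 : dotProduct (star (A *ᵥ Pi.single i 1)) (ι.symm v) = 0 :=
      by have := (Submodule.mem_orthogonal _ v).1 h _ (mem_matSupp.2 ⟨Pi.single i 1, rfl⟩)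
         rw [inner_eq0] at this; exact this
    rw [star_mulVec, ← Matrix.dotProduct_mulVec] at h3
    simpa [dotProduct, Pi.single_apply] using h3
  · intro h
    rw [Submodule.mem_orthogonal]
    rintro w hw
    rcases mem_matSupp.1 hw with ⟨u, rfl⟩
    have : dotProduct (star (A *ᵥ u)) (ι.symm v) = 0 := by
      rw [star_mulVec, ← Matrix.dotProduct_mulVec, h, dotProduct_zero]
    rw [inner_eq0]; exact this

lemma mem_matSupp_orth {A : Matrix (Fin d) (Fin d) ℂ} (hA : A.IsHermitian)
    {v : EuclideanSpace ℂ (Fin d)} : v ∈ (matSupp A)ᗮ ↔ A *ᵥ (ι.symm v) = 0 := by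
  rw [mem_matSupp_orth', hA.eq]

open scoped MatrixOrder in
lemma psd_sq {A : Matrix (Fin d) (Fin d) ℂ} (hA : A.PosSemidef) :
    ∃ B : Matrix (Fin d) (Fin d) ℂ, A = Bᴴ * B :=
  by obtain ⟨B, hB⟩ := CStarAlgebra.nonneg_iff_eq_star_mul_self.mp hA.nonneg; exact ⟨B, hB⟩

lemma psd_mulVec_eq_zero {A : Matrix (Fin d) (Fin d) ℂ} (hA : A.PosSemidef)
    {v : Fin d → ℂ} (h : dotProduct (star v) (A *ᵥ v) = 0) : A *ᵥ v = 0 := by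
  obtain ⟨B, rfl⟩ := psd_sq hA
  have h1 : dotProduct (star (B *ᵥ v)) (B *ᵥ v) = 0 := by
    rw [star_mulVec]
    rwa [← Matrix.mulVec_mulVec, Matrix.dotProduct_mulVec] at h
  have h2 : B *ᵥ v = 0 := dotProduct_star_self_eq_zero.1 h1
  rw [← Matrix.mulVec_mulVec, h2, Matrix.mulVec_zero]

/-- `matSupp` is monotone along sums of PSD matrices. -/
lemma matSupp_le_matSupp_sum {m : ℕ} {T : Fin m → Matrix (Fin d) (Fin d) ℂ}
    (hT : ∀ i, (T i).PosSemidef) (j : Fin m) :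
    matSupp (T j) ≤ matSupp (∑ i, T i) := by
  have hsum : (∑ i, T i).PosSemidef := psd_sum hT
  have horth : (matSupp (∑ i, T i))ᗮ ≤ (matSupp (T j))ᗮ := by
    intro v hv
    rw [mem_matSupp_orth hsum.isHermitian] at hv
    rw [mem_matSupp_orth (hT j).isHermitian]
    have hq : dotProduct (star (ι.symm v)) ((∑ i, T i) *ᵥ (ι.symm v)) = 0 := by
      rw [hv, dotProduct_zero]
    rw [sum_mulVec', dotProduct_sum'] at hq
    have hz : ∀ i ∈ Finset.univ, dotProduct (star (ι.symm v)) ((T i) *ᵥ (ι.symm v)) = 0 := by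
      rw [← Finset.sum_eq_zero_iff_of_nonneg (fun i _ => (hT i).dotProduct_mulVec_nonneg (ι.symm v))]
      exact hq
    exact psd_mulVec_eq_zero (hT j) (hz j (Finset.mem_univ j))
  calc matSupp (T j) = (matSupp (T j))ᗮᗮ := (Submodule.orthogonal_orthogonal _).symm
    _ ≤ (matSupp (∑ i, T i))ᗮᗮ := Submodule.orthogonal_le horth
    _ = matSupp (∑ i, T i) := Submodule.orthogonal_orthogonal _

lemma matSupp_sum_le {m : ℕ} {T : Fin m → Matrix (Fin d) (Fin d) ℂ}
    {W : Submodule ℂ (EuclideanSpace ℂ (Fin d))} (hT : ∀ i, matSupp (T i) ≤ W) :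
    matSupp (∑ i, T i) ≤ W := by
  rw [matSupp_le_iff]
  intro u
  rw [sum_mulVec', map_sum]
  exact Submodule.sum_mem _ fun i _ => matSupp_le_iff.1 (hT i) u

/-- support of `M * A * Mᴴ` equals the image of the support, for PSD `A`. -/
lemma matSupp_conj {A M : Matrix (Fin d) (Fin d) ℂ} (hA : A.PosSemidef) :
    matSupp (M * A * Mᴴ) = (matSupp A).map (Matrix.toEuclideanLin M) := by
  obtain ⟨B, rfl⟩ := psd_sq hA
  -- M * (Bᴴ*B) * Mᴴ = (B*Mᴴ)ᴴ * (B*Mᴴ)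
  have key : ∀ N : Matrix (Fin d) (Fin d) ℂ, matSupp (Nᴴ * N) = matSupp Nᴴ := by
    intro N
    have horth : ∀ v : EuclideanSpace ℂ (Fin d),
        v ∈ (matSupp (Nᴴ * N))ᗮ ↔ v ∈ (matSupp Nᴴ)ᗮ := by
      intro v
      rw [mem_matSupp_orth (Matrix.isHermitian_conjTranspose_mul_self N),
        mem_matSupp_orth']
      rw [Matrix.conjTranspose_conjTranspose]
      constructor
      · intro h
        have hq : dotProduct (star (ι.symm v)) ((Nᴴ * N) *ᵥ (ι.symm v)) = 0 := by
          rw [h, dotProduct_zero]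
        rw [← Matrix.mulVec_mulVec, Matrix.dotProduct_mulVec] at hq
        have hq2 : dotProduct (star (N *ᵥ ι.symm v)) (N *ᵥ ι.symm v) = 0 := by
          rw [star_mulVec]; exact hq
        exact dotProduct_star_self_eq_zero.1 hq2
      · intro h
        rw [← Matrix.mulVec_mulVec, h, Matrix.mulVec_zero]
    have : (matSupp (Nᴴ * N))ᗮ = (matSupp Nᴴ)ᗮ := by ext v; exact horth v
    calc matSupp (Nᴴ * N) = (matSupp (Nᴴ * N))ᗮᗮ := (Submodule.orthogonal_orthogonal _).symm
      _ = (matSupp Nᴴ)ᗮᗮ := by rw [this]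
      _ = matSupp Nᴴ := Submodule.orthogonal_orthogonal _
  have e1 : M * (Bᴴ * B) * Mᴴ = (B * Mᴴ)ᴴ * (B * Mᴴ) := by
    rw [Matrix.conjTranspose_mul, Matrix.conjTranspose_conjTranspose]
    noncomm_ring
  rw [e1, key, key B]
  -- matSupp (B*Mᴴ)ᴴ = matSupp (M * Bᴴ) = map (tEL M) (matSupp Bᴴ)
  have e2 : (B * Mᴴ)ᴴ = M * Bᴴ := by
    rw [Matrix.conjTranspose_mul, Matrix.conjTranspose_conjTranspose]
  rw [e2]
  -- range of composition
  apply le_antisymm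
  · rw [matSupp_le_iff]
    intro u
    refine Submodule.mem_map.2 ⟨ι (Bᴴ *ᵥ u), mem_matSupp.2 ⟨u, rfl⟩, ?_⟩
    rw [tEL_apply, LinearEquiv.symm_apply_apply, Matrix.mulVec_mulVec]
  · rintro v hv
    rcases Submodule.mem_map.1 hv with ⟨w, hw, rfl⟩
    rcases mem_matSupp.1 hw with ⟨u, rfl⟩
    refine mem_matSupp.2 ⟨u, ?_⟩
    rw [tEL_apply, LinearEquiv.symm_apply_apply, Matrix.mulVec_mulVec]

end Aux
namespace Aux
variable {d : ℕ}

lemma outer_conjTranspose (v : EuclideanSpace ℂ (Fin d)) : (outer v)ᴴ = outer v := by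
  ext i j
  simp [outer, Matrix.conjTranspose_apply, mul_comm]

lemma outer_mulVec (v : EuclideanSpace ℂ (Fin d)) (u : Fin d → ℂ) :
    (outer v) *ᵥ u = (dotProduct (star (ι.symm v)) u) • (ι.symm v : Fin d → ℂ) := by
  ext i
  simp only [Matrix.mulVec, dotProduct, outer, Pi.smul_apply, smul_eq_mul, Finset.sum_mul,
    Finset.mul_sum]
  apply Finset.sum_congr rfl
  intro j _
  show v i * star (v j) * u j = star (v j) * u j * v i
  ring

lemma outer_psd (v : EuclideanSpace ℂ (Fin d)) : (outer v).PosSemidef := by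
  refine .of_dotProduct_mulVec_nonneg (outer_conjTranspose v) fun u => ?_
  rw [outer_mulVec, dotProduct_smul]
  have h1 : dotProduct (star u) (ι.symm v : Fin d → ℂ) = star (dotProduct (star (ι.symm v)) u) := by
    rw [Matrix.star_dotProduct]
  rw [h1, smul_eq_mul]
  exact mul_star_self_nonneg _

lemma trace_outer (v : EuclideanSpace ℂ (Fin d)) :
    (outer v).trace = dotProduct (star (ι.symm v)) (ι.symm v) := by
  simp [Matrix.trace, Matrix.diag, outer, dotProduct, mul_comm]

lemma matSupp_outer (v : EuclideanSpace ℂ (Fin d)) :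
    matSupp (outer v) = Submodule.span ℂ {v} := by
  apply le_antisymm
  · rw [matSupp_le_iff]
    intro u
    rw [outer_mulVec, LinearEquiv.map_smul]
    have : ι (ι.symm v) = v := ι.apply_symm_apply v
    rw [this]
    exact Submodule.smul_mem _ _ (Submodule.mem_span_singleton_self v)
  · rw [Submodule.span_le, Set.singleton_subset_iff]
    by_cases hv : v = 0
    · subst hv; exact Submodule.zero_mem _
    · have hv' : (ι.symm v : Fin d → ℂ) ≠ 0 := fun h => hv (by
        rw [← ι.apply_symm_apply v, h, map_zero])
      set c := dotProduct (star (ι.symm v)) (ι.symm v : Fin d → ℂ) with hc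
      have hc0 : c ≠ 0 := fun h => hv' (dotProduct_star_self_eq_zero.1 h)
      refine mem_matSupp.2 ⟨c⁻¹ • (ι.symm v), ?_⟩
      rw [outer_mulVec, dotProduct_smul, ← hc, smul_eq_mul, inv_mul_cancel₀ hc0, one_smul]
      exact ι.apply_symm_apply v

lemma outer_conj (M : Matrix (Fin d) (Fin d) ℂ) (v : EuclideanSpace ℂ (Fin d)) :
    M * outer v * Mᴴ = outer (ι (M *ᵥ ι.symm v)) := by
  ext i j
  show (M * outer v * Mᴴ) i j = (M *ᵥ ι.symm v) i * star ((M *ᵥ ι.symm v) j)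
  simp only [Matrix.mul_apply, outer, Matrix.conjTranspose_apply, Matrix.mulVec, dotProduct,
    star_sum, Finset.sum_mul, Finset.mul_sum, star_mul']
  have hv : ∀ t, (ι.symm v) t = v t := fun _ => rfl
  simp only [hv]
  refine Finset.sum_congr rfl fun k _ => Finset.sum_congr rfl fun l _ => by ring

end Aux
namespace Aux
variable {d m : ℕ}

lemma mat_ext_mulVec {A B : Matrix (Fin d) (Fin d) ℂ} (h : ∀ u, A *ᵥ u = B *ᵥ u) : A = B := by
  ext i j
  have := congrFun (h (Pi.single j 1)) i
  simpa [Matrix.mulVec, dotProduct, Pi.single_apply] using this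

lemma kraus_psd (E : Fin m → Matrix (Fin d) (Fin d) ℂ) {A : Matrix (Fin d) (Fin d) ℂ}
    (hA : A.PosSemidef) : (krausMap E A).PosSemidef :=
  psd_sum fun i => hA.mul_mul_conjTranspose_same (E i)

lemma kraus_trace (E : Fin m → Matrix (Fin d) (Fin d) ℂ)
    (hE : ∑ i, (E i)ᴴ * E i = 1) (A : Matrix (Fin d) (Fin d) ℂ) :
    (krausMap E A).trace = A.trace := by
  rw [krausMap, Matrix.trace_sum]
  have h1 : ∀ i : Fin m, (E i * A * (E i)ᴴ).trace = ((E i)ᴴ * E i * A).trace := by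
    intro i
    rw [Matrix.trace_mul_cycle]
  rw [Finset.sum_congr rfl fun i _ => h1 i, ← Matrix.trace_sum]
  have h2 : ∑ i : Fin m, (E i)ᴴ * E i * A = (∑ i : Fin m, (E i)ᴴ * E i) * A :=
    (Finset.sum_mul _ _ _).symm
  rw [h2, hE, Matrix.one_mul]

lemma trace_kraus_pair (E : Fin m → Matrix (Fin d) (Fin d) ℂ) (A B : Matrix (Fin d) (Fin d) ℂ) :
    (krausMap E A * B).trace = (A * ∑ i, (E i)ᴴ * B * E i).trace := by
  rw [krausMap, Finset.sum_mul, Matrix.trace_sum]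
  have h1 : ∀ i : Fin m, (E i * A * (E i)ᴴ * B).trace = (A * ((E i)ᴴ * B * E i)).trace := by
    intro i
    have e1 : E i * A * (E i)ᴴ * B = E i * (A * ((E i)ᴴ * B)) := by
      simp only [Matrix.mul_assoc]
    have e2 : A * ((E i)ᴴ * B) * E i = A * ((E i)ᴴ * B * E i) := by
      simp only [Matrix.mul_assoc]
    rw [e1, Matrix.trace_mul_comm, e2]
  rw [Finset.sum_congr rfl fun i _ => h1 i, ← Matrix.trace_sum, ← Finset.mul_sum]

/-- Kraus-invariance of a subspace. -/
def KrInv (E : Fin m → Matrix (Fin d) (Fin d) ℂ)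
    (W : Submodule ℂ (EuclideanSpace ℂ (Fin d))) : Prop :=
  ∀ i : Fin m, ∀ w ∈ W, ι (E i *ᵥ ι.symm w) ∈ W

lemma matSupp_kraus_le {E : Fin m → Matrix (Fin d) (Fin d) ℂ}
    {W : Submodule ℂ (EuclideanSpace ℂ (Fin d))} (hW : KrInv E W)
    {ρ : Matrix (Fin d) (Fin d) ℂ} (hρ : matSupp ρ ≤ W) : matSupp (krausMap E ρ) ≤ W := by
  rw [krausMap]
  apply matSupp_sum_le
  intro i
  rw [matSupp_le_iff]
  intro u
  have h1 : (E i * ρ * (E i)ᴴ) *ᵥ u = E i *ᵥ (ρ *ᵥ ((E i)ᴴ *ᵥ u)) := by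
    rw [← Matrix.mulVec_mulVec, ← Matrix.mulVec_mulVec]
  rw [h1]
  have h2 : ι (ρ *ᵥ ((E i)ᴴ *ᵥ u)) ∈ W := matSupp_le_iff.1 hρ _
  have h3 := hW i _ h2
  rwa [LinearEquiv.symm_apply_apply] at h3

lemma reach_le {E : Fin m → Matrix (Fin d) (Fin d) ℂ}
    {W : Submodule ℂ (EuclideanSpace ℂ (Fin d))} (hW : KrInv E W)
    {ρ : Matrix (Fin d) (Fin d) ℂ} (hρ : matSupp ρ ≤ W) : Reach E ρ ≤ W := by
  rw [Reach]
  apply iSup_le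
  intro n
  induction n with
  | zero => exact hρ
  | succ n ih =>
    rw [Function.iterate_succ_apply']
    exact matSupp_kraus_le hW ih

lemma bscc_krinv {E : Fin m → Matrix (Fin d) (Fin d) ℂ}
    {B : Submodule ℂ (EuclideanSpace ℂ (Fin d))} (hB : IsBSCC E B) : KrInv E B := by
  intro i w hw
  have h0 : matSupp (outer w) ≤ B := by
    rw [matSupp_outer, Submodule.span_le, Set.singleton_subset_iff]; exact hw
  have h1 : matSupp (krausMap E (outer w)) ≤ B := hB.2.1 (outer w) (outer_psd w) h0
  have h2 : matSupp (E i * outer w * (E i)ᴴ) ≤ matSupp (krausMap E (outer w)) :=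
    matSupp_le_matSupp_sum (fun j => (outer_psd w).mul_mul_conjTranspose_same (E j)) i
  have h3 : ι (E i *ᵥ ι.symm w) ∈ matSupp (E i * outer w * (E i)ᴴ) := by
    rw [outer_conj, matSupp_outer]
    exact Submodule.mem_span_singleton_self _
  exact h1 (h2 h3)

/-- support of a fixed point is Kraus-invariant -/
lemma fixed_supp_krinv {E : Fin m → Matrix (Fin d) (Fin d) ℂ}
    {σ : Matrix (Fin d) (Fin d) ℂ} (hσ : σ.PosSemidef) (hfix : krausMap E σ = σ) :
    KrInv E (matSupp σ) := by
  intro i w hw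
  have h1 : ι (E i *ᵥ ι.symm w) ∈ matSupp (E i * σ * (E i)ᴴ) := by
    rw [matSupp_conj hσ]
    exact Submodule.mem_map.2 ⟨w, hw, rfl⟩
  have h2 : matSupp (E i * σ * (E i)ᴴ) ≤ matSupp (krausMap E σ) :=
    matSupp_le_matSupp_sum (fun j => hσ.mul_mul_conjTranspose_same (E j)) i
  rw [hfix] at h2
  exact h2 h1

section Proj
variable (X : Submodule ℂ (EuclideanSpace ℂ (Fin d)))

lemma projMat_mulVec (v : EuclideanSpace ℂ (Fin d)) :
    ι ((projMat X) *ᵥ (ι.symm v)) = (X.orthogonalProjectionOnto v : EuclideanSpace ℂ (Fin d)) := by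
  have h : Matrix.toEuclideanLin (projMat X) v
      = (X.subtypeL.comp X.orthogonalProjectionOnto).toLinearMap v := by
    rw [projMat, Matrix.toEuclideanLin.apply_symm_apply]
  exact h

lemma projMat_conjTranspose : (projMat X)ᴴ = projMat X := by
  have h : (projMat X).IsHermitian := by
    rw [Matrix.isHermitian_iff_isSymmetric]
    intro x y
    have hx := projMat_mulVec X x
    have hy := projMat_mulVec X y
    rw [tEL_apply, hx, tEL_apply, hy]
    exact X.inner_starProjection_left_eq_right x y
  exact h

lemma projMat_mul_self : projMat X * projMat X = projMat X := by
  apply mat_ext_mulVec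
  intro u
  have h1 : ∀ w : Fin d → ℂ, (projMat X) *ᵥ w = ι.symm ((X.orthogonalProjectionOnto (ι w) : EuclideanSpace ℂ (Fin d))) := by
    intro w
    have := projMat_mulVec X (ι w)
    rw [LinearEquiv.symm_apply_apply] at this
    rw [← this, LinearEquiv.symm_apply_apply]
  rw [← Matrix.mulVec_mulVec, h1 u, h1]
  congr 1
  rw [LinearEquiv.apply_symm_apply]
  exact congrArg _ (Submodule.orthogonalProjectionOnto_mem_subspace_eq_self _)

lemma projMat_mulVec_mem (v : EuclideanSpace ℂ (Fin d)) (hv : v ∈ X) :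
    ι ((projMat X) *ᵥ (ι.symm v)) = v := by
  rw [projMat_mulVec]
  exact Submodule.starProjection_eq_self_iff.2 hv

lemma projMat_mulVec_eq_zero {v : EuclideanSpace ℂ (Fin d)} :
    (projMat X) *ᵥ (ι.symm v) = 0 ↔ v ∈ Xᗮ := by
  constructor
  · intro h
    rw [← Submodule.orthogonalProjectionOnto_eq_zero_iff (K := X)]
    have := projMat_mulVec X v
    rw [h, map_zero] at this
    exact Subtype.coe_injective (by simpa using this.symm)
  · intro h
    have : ι ((projMat X) *ᵥ (ι.symm v)) = ι 0 := by
      rw [map_zero, projMat_mulVec, Submodule.orthogonalProjectionOnto_eq_zero_iff.2 h]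
      rfl
    exact ι.injective this

end Proj
end Aux
namespace Aux
variable {d m : ℕ}

open scoped MatrixOrder in
lemma psd_sq' {A : Matrix (Fin d) (Fin d) ℂ} (hA : A.PosSemidef) :
    ∃ C : Matrix (Fin d) (Fin d) ℂ, Cᴴ = C ∧ A = C * C :=
  ⟨CFC.sqrt A, (CFC.sqrt_nonneg A).posSemidef.isHermitian.eq, (CFC.sqrt_mul_sqrt_self A hA.nonneg).symm⟩

lemma psd_trace_zero {A : Matrix (Fin d) (Fin d) ℂ} (hA : A.PosSemidef)
    (h : A.trace = 0) : A = 0 := by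
  obtain ⟨B, rfl⟩ := psd_sq hA
  have h1 : ∀ j, dotProduct (star (fun k => B k j)) (fun k => B k j) = (Bᴴ * B) j j := by
    intro j
    simp [Matrix.mul_apply, dotProduct, Matrix.conjTranspose_apply]
  have h2 : ∀ j, dotProduct (star (fun k => B k j)) (fun k => B k j) = 0 := by
    intro j
    have hnn : ∀ j' ∈ Finset.univ, (0:ℂ) ≤ dotProduct (star (fun k => B k j')) (fun k => B k j') :=
      fun j' _ => dotProduct_star_self_nonneg _
    have hsum : ∑ j' : Fin d, dotProduct (star (fun k => B k j')) (fun k => B k j') = 0 := by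
      rw [Finset.sum_congr rfl (fun j' _ => h1 j')]
      exact h
    exact (Finset.sum_eq_zero_iff_of_nonneg hnn).1 hsum j (Finset.mem_univ j)
  have hB0 : B = 0 := by
    ext i j
    have h3 := congrFun (dotProduct_star_self_eq_zero.1 (h2 j)) i
    simpa using h3
  rw [hB0, Matrix.conjTranspose_zero, Matrix.mul_zero]

lemma psd_trace_mul_zero {A B : Matrix (Fin d) (Fin d) ℂ} (hA : A.PosSemidef)
    (hB : B.PosSemidef) (h : (A * B).trace = 0) : B * A = 0 := by
  obtain ⟨c, hc, hc2⟩ := psd_sq' hA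
  obtain ⟨r, hr, hr2⟩ := psd_sq' hB
  have hT : (r * A * r).PosSemidef := by
    have := hA.mul_mul_conjTranspose_same r
    rwa [hr] at this
  have htr : (r * A * r).trace = 0 := by
    rw [Matrix.trace_mul_cycle, ← hr2, Matrix.trace_mul_comm]
    exact h
  have hT0 : r * A * r = 0 := psd_trace_zero hT htr
  have hrc : r * c = 0 := by
    rw [← Matrix.self_mul_conjTranspose_eq_zero (A := r * c)]
    have e : r * c * (r * c)ᴴ = r * A * r := by
      rw [Matrix.conjTranspose_mul, hc, hr, hc2]
      simp only [Matrix.mul_assoc]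
    rw [e, hT0]
  rw [hr2, hc2]
  calc r * r * (c * c) = r * (r * c) * c := by simp only [Matrix.mul_assoc]
    _ = 0 := by rw [hrc, Matrix.mul_zero, Matrix.zero_mul]

section Key
variable {E : Fin m → Matrix (Fin d) (Fin d) ℂ}
variable {X : Submodule ℂ (EuclideanSpace ℂ (Fin d))}

/-- matrix-level invariance -/
lemma krinv_mat (hX : KrInv E X) (i : Fin m) :
    projMat X * E i * projMat X = E i * projMat X := by
  apply mat_ext_mulVec
  intro u
  set Q := projMat X
  have hmem : ι (Q *ᵥ u) ∈ X := by
    have h1 : ι (Q *ᵥ ι.symm (ι u)) = (X.orthogonalProjectionOnto (ι u) : EuclideanSpace ℂ (Fin d)) :=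
      projMat_mulVec X (ι u)
    rw [LinearEquiv.symm_apply_apply] at h1
    rw [h1]
    exact (X.orthogonalProjectionOnto (ι u)).2
  have h2 : ι (E i *ᵥ ι.symm (ι (Q *ᵥ u))) ∈ X := hX i _ hmem
  rw [LinearEquiv.symm_apply_apply] at h2
  have h3 : ι (Q *ᵥ ι.symm (ι (E i *ᵥ (Q *ᵥ u)))) = ι (E i *ᵥ (Q *ᵥ u)) :=
    projMat_mulVec_mem X _ h2
  rw [LinearEquiv.symm_apply_apply] at h3
  have h4 := ι.injective h3
  simp only [← Matrix.mulVec_mulVec]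
  exact h4

/-- the absorbed-mass observable -/
noncomputable def Mmat (E : Fin m → Matrix (Fin d) (Fin d) ℂ)
    (X : Submodule ℂ (EuclideanSpace ℂ (Fin d))) : Matrix (Fin d) (Fin d) ℂ :=
  ∑ i, (E i)ᴴ * projMat X * E i

lemma projMat_psd : (projMat X).PosSemidef := by
  have h : projMat X = (projMat X)ᴴ * projMat X := by
    rw [projMat_conjTranspose, projMat_mul_self]
  rw [h]
  exact Matrix.posSemidef_conjTranspose_mul_self _

lemma Q_Mmat (hE : ∑ i, (E i)ᴴ * E i = 1) (hX : KrInv E X) :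
    projMat X * Mmat E X = projMat X := by
  set Q := projMat X
  rw [Mmat, Finset.mul_sum]
  have h1 : ∀ i, Q * ((E i)ᴴ * Q * E i) = Q * (E i)ᴴ * E i := by
    intro i
    have e1 : Q * (E i)ᴴ * Q = Q * (E i)ᴴ := by
      have e2 : (Q * E i * Q)ᴴ = (E i * Q)ᴴ := congrArg _ (krinv_mat hX i)
      rw [Matrix.conjTranspose_mul, Matrix.conjTranspose_mul, Matrix.conjTranspose_mul,
        projMat_conjTranspose] at e2
      -- e2 : Q * ((E i)ᴴ * Q)?? check; massage with assoc
      rw [← Matrix.mul_assoc] at e2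
      exact e2
    calc Q * ((E i)ᴴ * Q * E i) = (Q * (E i)ᴴ * Q) * E i := by simp only [Matrix.mul_assoc]
      _ = Q * (E i)ᴴ * E i := by rw [e1]
  rw [Finset.sum_congr rfl fun i _ => h1 i]
  have h2 : ∑ i, Q * (E i)ᴴ * E i = Q * ∑ i, (E i)ᴴ * E i := by
    rw [Finset.mul_sum]
    exact Finset.sum_congr rfl fun i _ => (Matrix.mul_assoc _ _ _)
  rw [h2, hE, Matrix.mul_one]

lemma Mmat_herm : (Mmat E X).IsHermitian := by
  rw [Matrix.IsHermitian, Mmat, Matrix.conjTranspose_sum]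
  exact Finset.sum_congr rfl fun i _ =>
    (Matrix.isHermitian_conjTranspose_mul_mul (E i) (projMat_psd (X := X)).isHermitian).eq

lemma Mmat_Q (hE : ∑ i, (E i)ᴴ * E i = 1) (hX : KrInv E X) :
    Mmat E X * projMat X = projMat X := by
  have h := congrArg Matrix.conjTranspose (Q_Mmat hE hX)
  rwa [Matrix.conjTranspose_mul, projMat_conjTranspose, Mmat_herm.eq] at h

lemma R_psd (hE : ∑ i, (E i)ᴴ * E i = 1) (hX : KrInv E X) :
    (Mmat E X - projMat X).PosSemidef := by
  have hPH : (1 - projMat X)ᴴ = 1 - projMat X := by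
    rw [Matrix.conjTranspose_sub, Matrix.conjTranspose_one, projMat_conjTranspose]
  have h1 : ∀ i, (projMat X * E i * (1 - projMat X))ᴴ * (projMat X * E i * (1 - projMat X))
      = (1 - projMat X) * ((E i)ᴴ * projMat X * E i) * (1 - projMat X) := by
    intro i
    rw [Matrix.conjTranspose_mul, Matrix.conjTranspose_mul, hPH, projMat_conjTranspose]
    have hQQ : ∀ Z, projMat X * (projMat X * Z) = projMat X * Z := fun Z => by
      rw [← Matrix.mul_assoc, projMat_mul_self]
    simp only [Matrix.mul_assoc]
    rw [hQQ]
  have h2 : ∑ i, (1 - projMat X) * ((E i)ᴴ * projMat X * E i) * (1 - projMat X)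
      = (1 - projMat X) * Mmat E X * (1 - projMat X) := by
    rw [Mmat, Finset.mul_sum, Finset.sum_mul]
  have e3 : (1 - projMat X) * Mmat E X * (1 - projMat X)
      = Mmat E X - projMat X * Mmat E X
        - (Mmat E X * projMat X - projMat X * (Mmat E X * projMat X)) := by
    noncomm_ring
  have key : Mmat E X - projMat X
      = ∑ i, (projMat X * E i * (1 - projMat X))ᴴ * (projMat X * E i * (1 - projMat X)) := by
    rw [Finset.sum_congr rfl fun i _ => h1 i, h2, e3, Mmat_Q hE hX, Q_Mmat hE hX,
      projMat_mul_self]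
    abel
  rw [key]
  exact psd_sum fun i => Matrix.posSemidef_conjTranspose_mul_self _

/-- The key step: fixed points see no leakage out of `Xᗮ`. -/
lemma key_orth (hE : ∑ i, (E i)ᴴ * E i = 1) (hX : KrInv E X)
    {σ : Matrix (Fin d) (Fin d) ℂ} (hσ : σ.PosSemidef) (hfix : krausMap E σ = σ)
    {y : EuclideanSpace ℂ (Fin d)} (hy : y ∈ matSupp σ) (hyX : y ∈ Xᗮ) (i : Fin m) :
    ι (E i *ᵥ ι.symm y) ∈ Xᗮ := by
  set Q := projMat X
  set R := Mmat E X - Q with hR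
  have hRpsd : R.PosSemidef := R_psd hE hX
  have htr : (σ * R).trace = 0 := by
    have h1 : (σ * Mmat E X).trace = (σ * Q).trace := by
      have := trace_kraus_pair E σ Q
      rw [hfix] at this
      rw [← Mmat] at this
      exact this.symm
    rw [hR, Matrix.mul_sub, Matrix.trace_sub, h1, sub_self]
  have hR0 : R * σ = 0 := psd_trace_mul_zero hσ hRpsd htr
  -- y is in the range of σ
  rcases mem_matSupp.1 hy with ⟨u, rfl⟩
  have hRy : R *ᵥ (σ *ᵥ u) = 0 := by
    rw [Matrix.mulVec_mulVec, hR0, Matrix.zero_mulVec]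
  set y' : Fin d → ℂ := σ *ᵥ u with hy'
  have hQy : Q *ᵥ y' = 0 := by
    have := (projMat_mulVec_eq_zero X).2 hyX
    rwa [LinearEquiv.symm_apply_apply] at this
  have hMy : Mmat E X *ᵥ y' = 0 := by
    have h2 : (Mmat E X - Q) *ᵥ y' = 0 := hRy
    rw [Matrix.sub_mulVec, hQy, sub_zero] at h2
    exact h2
  -- quadratic form vanishes, term by term
  have hquad : ∑ j, dotProduct (star y') (((E j)ᴴ * Q * E j) *ᵥ y') = 0 := by
    rw [← dotProduct_sum']
    rw [← sum_mulVec', ← Mmat, hMy, dotProduct_zero]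
  have hterm : dotProduct (star y') (((E i)ᴴ * Q * E i) *ᵥ y') = 0 := by
    have hnn : ∀ j ∈ Finset.univ, (0:ℂ) ≤ dotProduct (star y') (((E j)ᴴ * Q * E j) *ᵥ y') :=
      fun j _ => ((projMat_psd (X := X)).conjTranspose_mul_mul_same (E j)).dotProduct_mulVec_nonneg y'
    exact (Finset.sum_eq_zero_iff_of_nonneg hnn).1 hquad i (Finset.mem_univ i)
  -- hence Q (E i y) = 0
  have hz : dotProduct (star (E i *ᵥ y')) (Q *ᵥ (E i *ᵥ y')) = 0 := by
    rw [← hterm]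
    rw [← Matrix.mulVec_mulVec, ← Matrix.mulVec_mulVec, Matrix.dotProduct_mulVec (star y'),
      ← star_mulVec]
  have hQz : Q *ᵥ (E i *ᵥ y') = 0 := psd_mulVec_eq_zero projMat_psd hz
  rw [← projMat_mulVec_eq_zero X (v := ι (E i *ᵥ ι.symm (ι y')))]
  rw [LinearEquiv.symm_apply_apply, LinearEquiv.symm_apply_apply]
  exact hQz

end Key
end Aux
namespace Aux
variable {d m : ℕ}

attribute [local instance] Matrix.normedAddCommGroup Matrix.normedSpace

lemma inner_eq (x y : EuclideanSpace ℂ (Fin d)) :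
    (inner ℂ x y : ℂ) = dotProduct (star (ι.symm x)) (ι.symm y) := inner_eq0 x y

lemma complex_nonneg_of_tendsto {f : ℕ → ℂ} {c : ℂ} (h : Tendsto f atTop (𝓝 c))
    (hf : ∀ n, 0 ≤ f n) : 0 ≤ c := by
  rw [Complex.le_def]
  constructor
  · have hre : Tendsto (fun n => (f n).re) atTop (𝓝 c.re) :=
      (Complex.continuous_re.tendsto c).comp h
    exact ge_of_tendsto hre (Filter.Eventually.of_forall fun n => (Complex.le_def.1 (hf n)).1)
  · have him : Tendsto (fun n => (f n).im) atTop (𝓝 c.im) :=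
      (Complex.continuous_im.tendsto c).comp h
    have him0 : Tendsto (fun _ : ℕ => (0:ℝ)) atTop (𝓝 c.im) := by
      apply him.congr
      intro n
      exact ((Complex.le_def.1 (hf n)).2).symm
    exact (tendsto_nhds_unique him0 tendsto_const_nhds).symm

lemma psd_smul_nonneg {A : Matrix (Fin d) (Fin d) ℂ} (hA : A.PosSemidef) {r : ℝ} (hr : 0 ≤ r) :
    ((r : ℂ) • A).PosSemidef := by
  refine .of_dotProduct_mulVec_nonneg ?_ ?_
  · rw [Matrix.IsHermitian, Matrix.conjTranspose_smul, hA.isHermitian.eq]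
    rw [Complex.star_def, Complex.conj_ofReal]
  · intro x
    rw [Matrix.smul_mulVec, dotProduct_smul, smul_eq_mul]
    have h0 : (0:ℂ) ≤ (r:ℂ) := by
      rw [Complex.le_def]
      simp [hr]
    exact mul_nonneg h0 (hA.dotProduct_mulVec_nonneg x)

/-- entrywise bound for PSD matrices -/
lemma psd_entry_bound {A : Matrix (Fin d) (Fin d) ℂ} (hA : A.PosSemidef) (i j : Fin d) :
    ‖A i j‖ ≤ A.trace.re := by
  obtain ⟨B, rfl⟩ := psd_sq hA
  set col : Fin d → EuclideanSpace ℂ (Fin d) := fun l => ι (fun k => B k l) with hcol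
  have hentry : ∀ i' j', (Bᴴ * B) i' j' = inner ℂ (col i') (col j') := by
    intro i' j'
    rw [inner_eq]
    simp only [hcol, LinearEquiv.symm_apply_apply]
    simp [Matrix.mul_apply, Matrix.conjTranspose_apply, dotProduct]
  have hdiag : ∀ l, ((Bᴴ * B) l l).re = ‖col l‖ ^ 2 := by
    intro l
    rw [hentry l l]
    exact inner_self_eq_norm_sq (𝕜 := ℂ) (col l)
  have hdiag_nonneg : ∀ l, 0 ≤ ((Bᴴ * B) l l).re := fun l => by
    rw [hdiag]; positivity
  have htr : (Bᴴ * B).trace.re = ∑ l, ((Bᴴ * B) l l).re := by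
    rw [Matrix.trace]
    exact Complex.re_sum _ _
  have hle : ∀ l, ‖col l‖ ^ 2 ≤ (Bᴴ * B).trace.re := by
    intro l
    rw [htr, ← hdiag l]
    exact Finset.single_le_sum (fun l' _ => hdiag_nonneg l') (Finset.mem_univ l)
  have hcs : ‖(Bᴴ * B) i j‖ ≤ ‖col i‖ * ‖col j‖ := by
    rw [hentry i j]
    exact norm_inner_le_norm _ _
  have h1 : ‖col i‖ * ‖col j‖ ≤ (Bᴴ * B).trace.re := by
    nlinarith [hle i, hle j, norm_nonneg (col i), norm_nonneg (col j)]
  linarith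

end Aux
namespace Aux
variable {d m : ℕ}

attribute [local instance] Matrix.normedAddCommGroup Matrix.normedSpace

/-- kraus map as a linear map -/
noncomputable def krausLin (E : Fin m → Matrix (Fin d) (Fin d) ℂ) :
    Matrix (Fin d) (Fin d) ℂ →ₗ[ℂ] Matrix (Fin d) (Fin d) ℂ where
  toFun := krausMap E
  map_add' A B := by
    simp [krausMap, Matrix.mul_add, Matrix.add_mul, Finset.sum_add_distrib]
  map_smul' c A := by
    simp [krausMap, Matrix.mul_smul, Matrix.smul_mul, Finset.smul_sum]

noncomputable def entryLM (i j : Fin d) : Matrix (Fin d) (Fin d) ℂ →ₗ[ℂ] ℂ where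
  toFun M := M i j
  map_add' _ _ := rfl
  map_smul' _ _ := rfl

noncomputable def quadLM (x : Fin d → ℂ) : Matrix (Fin d) (Fin d) ℂ →ₗ[ℂ] ℂ where
  toFun M := dotProduct (star x) (M *ᵥ x)
  map_add' A B := by
    show dotProduct (star x) ((A + B) *ᵥ x) = _
    rw [Matrix.add_mulVec, dotProduct_add]
  map_smul' c A := by
    show dotProduct (star x) ((c • A) *ᵥ x) = _
    rw [RingHom.id_apply, Matrix.smul_mulVec, dotProduct_smul, smul_eq_mul]

noncomputable def traceLM : Matrix (Fin d) (Fin d) ℂ →ₗ[ℂ] ℂ where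
  toFun M := M.trace
  map_add' A B := Matrix.trace_add A B
  map_smul' c A := Matrix.trace_smul c A

noncomputable def mvLM (u : Fin d → ℂ) :
    Matrix (Fin d) (Fin d) ℂ →ₗ[ℂ] EuclideanSpace ℂ (Fin d) where
  toFun M := ι (M *ᵥ u)
  map_add' A B := by
    show ι ((A + B) *ᵥ u) = ι (A *ᵥ u) + ι (B *ᵥ u)
    rw [Matrix.add_mulVec, map_add]
  map_smul' c A := by
    show ι ((c • A) *ᵥ u) = c • ι (A *ᵥ u)
    rw [Matrix.smul_mulVec, LinearEquiv.map_smul]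

lemma sum_mulVec_range (T : ℕ → Matrix (Fin d) (Fin d) ℂ) (N : ℕ) (u : Fin d → ℂ) :
    (∑ n ∈ Finset.range N, T n) *ᵥ u = ∑ n ∈ Finset.range N, T n *ᵥ u :=
  map_sum (Matrix.mulVec.addMonoidHomLeft u) _ _

lemma psd_sum_range {T : ℕ → Matrix (Fin d) (Fin d) ℂ} (hT : ∀ n, (T n).PosSemidef) (N : ℕ) :
    (∑ n ∈ Finset.range N, T n).PosSemidef :=
  Finset.sum_induction T Matrix.PosSemidef (fun _ _ ha hb => ha.add hb)
    Matrix.PosSemidef.zero (fun n _ => hT n)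

lemma exists_fixed_state {E : Fin m → Matrix (Fin d) (Fin d) ℂ}
    (hE : ∑ i, (E i)ᴴ * E i = 1) {B : Submodule ℂ (EuclideanSpace ℂ (Fin d))}
    (hB : IsBSCC E B) :
    ∃ σ : Matrix (Fin d) (Fin d) ℂ, σ.PosSemidef ∧ krausMap E σ = σ ∧ matSupp σ = B := by
  classical
  obtain ⟨v₀, hv₀B, hv₀⟩ := Submodule.exists_mem_ne_zero_of_ne_bot hB.1
  have hρ₀psd : (outer v₀).PosSemidef := outer_psd v₀
  have htr0 : (outer v₀).trace ≠ 0 := by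
    rw [trace_outer]
    intro h
    exact hv₀ ((LinearEquiv.map_eq_zero_iff ι.symm).1 (dotProduct_star_self_eq_zero.1 h))
  have htrnn : (0:ℂ) ≤ (outer v₀).trace := by
    rw [trace_outer]; exact dotProduct_star_self_nonneg _
  set t : ℝ := (outer v₀).trace.re with ht
  have ht0 : 0 ≤ t := (Complex.le_def.1 htrnn).1
  set S : ℕ → Matrix (Fin d) (Fin d) ℂ := fun n => (krausMap E)^[n] (outer v₀) with hS
  have hSsucc : ∀ n, S (n + 1) = krausMap E (S n) := fun n =>
    Function.iterate_succ_apply' (krausMap E) n (outer v₀)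
  have hSpsd : ∀ n, (S n).PosSemidef := by
    intro n
    induction n with
    | zero => exact hρ₀psd
    | succ n ih => rw [hSsucc]; exact kraus_psd E ih
  have hStr : ∀ n, (S n).trace = (outer v₀).trace := by
    intro n
    induction n with
    | zero => rfl
    | succ n ih => rw [hSsucc, kraus_trace E hE, ih]
  have hKrB : KrInv E B := bscc_krinv hB
  have hSsupp : ∀ n, matSupp (S n) ≤ B := by
    intro n
    induction n with
    | zero =>
      rw [show S 0 = outer v₀ from rfl, matSupp_outer, Submodule.span_le,
        Set.singleton_subset_iff]
      exact hv₀B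
    | succ n ih => rw [hSsucc]; exact matSupp_kraus_le hKrB ih
  have hSbd : ∀ n, ‖S n‖ ≤ t := by
    intro n
    rw [Matrix.norm_le_iff ht0]
    intro i j
    have h1 := psd_entry_bound (hSpsd n) i j
    rwa [hStr n] at h1
  set A : ℕ → Matrix (Fin d) (Fin d) ℂ :=
    fun N => (((N:ℝ)⁻¹ : ℝ) : ℂ) • ∑ n ∈ Finset.range N, S n with hA
  have hApsd : ∀ N, (A N).PosSemidef := fun N =>
    psd_smul_nonneg (psd_sum_range hSpsd N) (inv_nonneg.2 (Nat.cast_nonneg N))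
  have hAtr : ∀ N, 1 ≤ N → (A N).trace = (outer v₀).trace := by
    intro N hN
    have hNne : ((N:ℝ) : ℂ) ≠ 0 := by
      simp only [ne_eq, Complex.ofReal_eq_zero, Nat.cast_eq_zero]
      omega
    rw [hA]
    simp only [Matrix.trace_smul, Matrix.trace_sum]
    rw [Finset.sum_congr rfl (fun n _ => hStr n), Finset.sum_const, Finset.card_range,
      smul_eq_mul, nsmul_eq_mul, ← mul_assoc, Complex.ofReal_inv]
    rw [show ((N:ℕ):ℂ) = ((N:ℝ):ℂ) by push_cast; ring]
    rw [inv_mul_cancel₀ hNne, one_mul]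
  have hAsupp : ∀ N, matSupp (A N) ≤ B := by
    intro N
    rw [matSupp_le_iff]
    intro u
    have e : (A N) *ᵥ u = (((N:ℝ)⁻¹ : ℝ) : ℂ) • ∑ n ∈ Finset.range N, (S n *ᵥ u) := by
      rw [hA]
      simp only
      rw [Matrix.smul_mulVec, sum_mulVec_range]
    rw [e, LinearEquiv.map_smul, _root_.map_sum]
    exact Submodule.smul_mem _ _ (Submodule.sum_mem _ fun n _ => matSupp_le_iff.1 (hSsupp n) u)
  have hAbd : ∀ N, ‖A N‖ ≤ t := by
    intro N
    rw [hA]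
    simp only
    rw [norm_smul]
    have h1 : ‖∑ n ∈ Finset.range N, S n‖ ≤ (N:ℝ) * t := by
      calc ‖∑ n ∈ Finset.range N, S n‖ ≤ ∑ n ∈ Finset.range N, ‖S n‖ :=
            norm_sum_le _ _
        _ ≤ ∑ _n ∈ Finset.range N, t := Finset.sum_le_sum fun n _ => hSbd n
        _ = (N:ℝ) * t := by rw [Finset.sum_const, Finset.card_range, nsmul_eq_mul]
    have h2 : ‖(((N:ℝ)⁻¹ : ℝ) : ℂ)‖ = (N:ℝ)⁻¹ := by
      rw [Complex.norm_real, Real.norm_eq_abs, abs_of_nonneg (inv_nonneg.2 (Nat.cast_nonneg N))]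
    rw [h2]
    calc (N:ℝ)⁻¹ * ‖∑ n ∈ Finset.range N, S n‖ ≤ (N:ℝ)⁻¹ * ((N:ℝ) * t) := by
          apply mul_le_mul_of_nonneg_left h1 (inv_nonneg.2 (Nat.cast_nonneg N))
      _ ≤ t := by
          rcases Nat.eq_zero_or_pos N with h | h
          · subst h; simp [ht0]
          · rw [← mul_assoc, inv_mul_cancel₀ (by positivity : (N:ℝ) ≠ 0), one_mul]
  haveI : ProperSpace (Matrix (Fin d) (Fin d) ℂ) := FiniteDimensional.proper ℂ _
  have hball : ∀ N, A N ∈ Metric.closedBall (0 : Matrix (Fin d) (Fin d) ℂ) t := by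
    intro N
    rw [Metric.mem_closedBall, dist_zero_right]
    exact hAbd N
  obtain ⟨σ, -, φ, hφ, hlim⟩ :=
    (isCompact_closedBall (0 : Matrix (Fin d) (Fin d) ℂ) t).tendsto_subseq hball
  have hφk : ∀ k, k ≤ φ k := fun k => hφ.le_apply
  have hcontC : ∀ (L : Matrix (Fin d) (Fin d) ℂ →ₗ[ℂ] ℂ),
      Tendsto (fun k => L (A (φ k))) atTop (𝓝 (L σ)) := fun L =>
    ((L.continuous_of_finiteDimensional).tendsto σ).comp hlim
  -- σ is PSD
  have hσpsd : σ.PosSemidef := by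
    refine .of_dotProduct_mulVec_nonneg ?_ ?_
    · have hherm : ∀ i j, starRingEnd ℂ (σ j i) = σ i j := by
        intro i j
        have h1 : Tendsto (fun k => starRingEnd ℂ (A (φ k) j i)) atTop
            (𝓝 (starRingEnd ℂ (σ j i))) :=
          ((Complex.continuous_conj.tendsto _).comp (hcontC (entryLM j i)))
        have h2 : Tendsto (fun k => A (φ k) i j) atTop (𝓝 (σ i j)) := hcontC (entryLM i j)
        have h3 : (fun k => starRingEnd ℂ (A (φ k) j i)) = fun k => A (φ k) i j := by
          funext k
          have h4 := congrFun (congrFun (hApsd (φ k)).isHermitian.eq i) j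
          simpa [Matrix.conjTranspose_apply] using h4
        rw [h3] at h1
        exact tendsto_nhds_unique h1 h2
      ext i j
      simpa [Matrix.conjTranspose_apply] using hherm i j
    · intro x
      exact complex_nonneg_of_tendsto (hcontC (quadLM x)) fun k => (hApsd (φ k)).dotProduct_mulVec_nonneg x
  -- trace
  have hσtr : σ.trace = (outer v₀).trace := by
    have h1 : (fun k => traceLM (A (φ k))) =ᶠ[atTop]
        (fun _ : ℕ => (outer v₀).trace) :=
      Filter.eventually_atTop.2 ⟨1, fun k hk => hAtr (φ k) (le_trans hk (hφk k))⟩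
    exact tendsto_nhds_unique (hcontC traceLM) (tendsto_const_nhds.congr' h1.symm)
  -- support inside B
  have hσsupp : matSupp σ ≤ B := by
    rw [matSupp_le_iff]
    intro u
    have hclosed : IsClosed (B : Set (EuclideanSpace ℂ (Fin d))) :=
      Submodule.closed_of_finiteDimensional B
    have h1 : Tendsto (fun k => mvLM u (A (φ k))) atTop (𝓝 (mvLM u σ)) :=
      (((mvLM u).continuous_of_finiteDimensional).tendsto σ).comp hlim
    exact hclosed.mem_of_tendsto h1
      (Filter.Eventually.of_forall fun k => matSupp_le_iff.1 (hAsupp (φ k)) u)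
  -- fixed point
  have hAkr : ∀ N, krausMap E (A N) = A N + (((N:ℝ)⁻¹ : ℝ) : ℂ) • (S N - S 0) := by
    intro N
    have h1 : krausMap E (A N) = (((N:ℝ)⁻¹ : ℝ) : ℂ) • ∑ n ∈ Finset.range N, S (n + 1) := by
      rw [hA]
      simp only
      rw [show krausMap E ((((N:ℝ)⁻¹:ℝ):ℂ) • ∑ n ∈ Finset.range N, S n)
          = krausLin E ((((N:ℝ)⁻¹:ℝ):ℂ) • ∑ n ∈ Finset.range N, S n) from rfl]
      rw [_root_.map_smul, _root_.map_sum]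
      congr 1
      exact Finset.sum_congr rfl fun n _ => (hSsucc n).symm
    have h2 : ∑ n ∈ Finset.range N, S (n + 1)
        = ∑ n ∈ Finset.range N, S n + S N - S 0 := by
      have h3 := Finset.sum_range_succ' S N
      have h4 := Finset.sum_range_succ S N
      rw [h4] at h3
      -- h3 : ∑_{i<N} S i + S N = ∑_{i<N} S (i+1) + S 0
      have := h3.symm
      rw [eq_sub_iff_add_eq]
      exact this.symm ▸ rfl
    rw [h1, h2, smul_sub, smul_add, smul_sub]
    rw [hA]
    simp only
    abel
  have hcorr : Tendsto (fun k => (((φ k:ℝ)⁻¹ : ℝ) : ℂ) • (S (φ k) - S 0)) atTop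
      (𝓝 (0 : Matrix (Fin d) (Fin d) ℂ)) := by
    have hg : Tendsto (fun k : ℕ => (k:ℝ)⁻¹ * (2 * t)) atTop (𝓝 0) := by
      have := tendsto_inv_atTop_nhds_zero_nat.mul_const (2 * t)
      simpa using this
    apply squeeze_zero_norm' _ hg
    rw [Filter.eventually_atTop]
    refine ⟨1, fun k hk => ?_⟩
    have hφpos : (0:ℝ) < (φ k : ℝ) := by
      have : 1 ≤ φ k := le_trans hk (hφk k)
      exact_mod_cast Nat.lt_of_lt_of_le Nat.zero_lt_one this
    have h1 : ‖(((φ k:ℝ)⁻¹ : ℝ) : ℂ) • (S (φ k) - S 0)‖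
        = ((φ k:ℝ))⁻¹ * ‖S (φ k) - S 0‖ := by
      rw [norm_smul, Complex.norm_real, Real.norm_eq_abs,
        abs_of_nonneg (inv_nonneg.2 (le_of_lt hφpos))]
    rw [h1]
    have h2 : ‖S (φ k) - S 0‖ ≤ 2 * t := by
      calc ‖S (φ k) - S 0‖ ≤ ‖S (φ k)‖ + ‖S 0‖ := norm_sub_le _ _
        _ ≤ t + t := add_le_add (hSbd _) (hSbd _)
        _ = 2 * t := by ring
    have h3 : ((φ k:ℝ))⁻¹ ≤ (k:ℝ)⁻¹ := by
      apply inv_anti₀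
      · exact_mod_cast Nat.lt_of_lt_of_le Nat.zero_lt_one hk
      · exact_mod_cast hφk k
    calc ((φ k:ℝ))⁻¹ * ‖S (φ k) - S 0‖ ≤ ((φ k:ℝ))⁻¹ * (2 * t) :=
          mul_le_mul_of_nonneg_left h2 (inv_nonneg.2 (le_of_lt hφpos))
      _ ≤ (k:ℝ)⁻¹ * (2 * t) := mul_le_mul_of_nonneg_right h3 (by positivity)
  have hlim2 : Tendsto (fun k => krausMap E (A (φ k))) atTop (𝓝 σ) := by
    have h1 := hlim.add hcorr
    rw [add_zero] at h1
    apply h1.congr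
    intro k
    exact (hAkr (φ k)).symm
  have hlim3 : Tendsto (fun k => krausMap E (A (φ k))) atTop (𝓝 (krausMap E σ)) := by
    have hc : Continuous (krausLin (d := d) E) := (krausLin E).continuous_of_finiteDimensional
    exact ((hc.tendsto σ).comp hlim)
  have hfix : krausMap E σ = σ := tendsto_nhds_unique hlim3 hlim2
  -- support is exactly B
  have hσne : matSupp σ ≠ ⊥ := by
    intro h
    rw [matSupp, LinearMap.range_eq_bot] at h
    have hσ0 : σ = 0 :=
      (LinearEquiv.map_eq_zero_iff
        (Matrix.toEuclideanLin (𝕜 := ℂ) (m := Fin d) (n := Fin d))).1 h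
    rw [hσ0, Matrix.trace_zero] at hσtr
    exact htr0 hσtr.symm
  obtain ⟨w, hwsupp, hwne⟩ := Submodule.exists_mem_ne_zero_of_ne_bot hσne
  have hwB : w ∈ B := hσsupp hwsupp
  have h5 : Reach E (outer w) = B := hB.2.2 w hwB hwne
  have h6 : Reach E (outer w) ≤ matSupp σ :=
    reach_le (fixed_supp_krinv hσpsd hfix)
      (by rw [matSupp_outer, Submodule.span_le, Set.singleton_subset_iff]; exact hwsupp)
  exact ⟨σ, hσpsd, hfix, le_antisymm hσsupp (h5 ▸ h6)⟩

end Aux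
namespace Aux
variable {d m : ℕ}

lemma not_orth_cases {E : Fin m → Matrix (Fin d) (Fin d) ℂ}
    (hE : ∑ i, (E i)ᴴ * E i = 1)
    {X Y : Submodule ℂ (EuclideanSpace ℂ (Fin d))} (hX : IsBSCC E X) (hY : IsBSCC E Y) :
    Y ⊓ Xᗮ = ⊥ ∨ Y ≤ Xᗮ := by
  by_cases hcap : Y ⊓ Xᗮ = ⊥
  · exact Or.inl hcap
  · right
    obtain ⟨σ, hσpsd, hfix, hσsupp⟩ := exists_fixed_state hE hY
    obtain ⟨y₀, hy₀, hy₀ne⟩ := Submodule.exists_mem_ne_zero_of_ne_bot hcap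
    have hKrW : KrInv E (Y ⊓ Xᗮ) := by
      intro i w hw
      rw [Submodule.mem_inf] at hw ⊢
      constructor
      · exact bscc_krinv hY i w hw.1
      · exact key_orth hE (bscc_krinv hX) hσpsd hfix (hσsupp ▸ hw.1) hw.2 i
    have hreach : Reach E (outer y₀) ≤ Y ⊓ Xᗮ :=
      reach_le hKrW
        (by rw [matSupp_outer, Submodule.span_le, Set.singleton_subset_iff]; exact hy₀)
    rw [hY.2.2 y₀ (Submodule.mem_inf.1 hy₀).1 hy₀ne] at hreach
    exact le_trans hreach inf_le_right

lemma finrank_le_of_inf_orth_bot {X Y : Submodule ℂ (EuclideanSpace ℂ (Fin d))}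
    (h : Y ⊓ Xᗮ = ⊥) : Module.finrank ℂ Y ≤ Module.finrank ℂ X := by
  have hinj : Function.Injective
      ((X.orthogonalProjectionOnto : EuclideanSpace ℂ (Fin d) →ₗ[ℂ] X).domRestrict Y) := by
    rw [← LinearMap.ker_eq_bot]
    rw [Submodule.eq_bot_iff]
    rintro ⟨y, hyY⟩ hy
    rw [LinearMap.mem_ker, LinearMap.domRestrict_apply] at hy
    have hyX : y ∈ Xᗮ := Submodule.orthogonalProjectionOnto_eq_zero_iff.1 hy
    have : y ∈ Y ⊓ Xᗮ := Submodule.mem_inf.2 ⟨hyY, hyX⟩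
    rw [h, Submodule.mem_bot] at this
    exact Subtype.ext this
  exact LinearMap.finrank_le_finrank_of_injective hinj

end Aux

/-- BSCCs of different dimensions are orthogonal. -/
theorem stmt10 {d m : ℕ} (E : Fin m → Matrix (Fin d) (Fin d) ℂ)
    (hE : ∑ i, (E i)ᴴ * E i = 1)
    (X Y : Submodule ℂ (EuclideanSpace ℂ (Fin d))) (hX : IsBSCC E X) (hY : IsBSCC E Y)
    (hdim : Module.finrank ℂ X ≠ Module.finrank ℂ Y) :
    ∀ x ∈ X, ∀ y ∈ Y, inner ℂ x y = (0 : ℂ) := by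
  intro x hx y hy
  rcases Aux.not_orth_cases hE hX hY with hbot1 | hle1
  · rcases Aux.not_orth_cases hE hY hX with hbot2 | hle2
    · exfalso
      apply hdim
      exact le_antisymm (Aux.finrank_le_of_inf_orth_bot hbot2)
        (Aux.finrank_le_of_inf_orth_bot hbot1)
    · have hxY : x ∈ Yᗮ := hle2 hx
      have := (Submodule.mem_orthogonal Y x).1 hxY y hy
      rw [← inner_conj_symm, this, map_zero]
  · have hyX : y ∈ Xᗮ := hle1 hy
    exact (Submodule.mem_orthogonal X y).1 hyX x hx
end

section
/- A subspace X is a BSCC of a quantum Markov chain (H, E) if and only if R(φ) = X for every nonzero vector |φ⟩ ∈ X, where R(φ) is the reachable space of |φ⟩. -/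
open Matrix Filter Topology
open scoped ComplexOrder

/-- The restriction `E|_X(A) = P_X E(A) P_X` of the super-operator to a subspace. -/
noncomputable def restrMap {d m : ℕ} (E : Fin m → Matrix (Fin d) (Fin d) ℂ)
    (X : Submodule ℂ (EuclideanSpace ℂ (Fin d))) (A : Matrix (Fin d) (Fin d) ℂ) :
    Matrix (Fin d) (Fin d) ℂ :=
  projMat X * krausMap E A * projMat X

/-- The reachable space of `ρ` inside the restricted chain on `X`. -/
noncomputable def ReachIn {d m : ℕ} (E : Fin m → Matrix (Fin d) (Fin d) ℂ)
    (X : Submodule ℂ (EuclideanSpace ℂ (Fin d))) (ρ : Matrix (Fin d) (Fin d) ℂ) :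
    Submodule ℂ (EuclideanSpace ℂ (Fin d)) :=
  ⨆ n : ℕ, matSupp ((restrMap E X)^[n] ρ)

/-- A subspace is strongly connected if any two nonzero vectors in it are mutually
reachable in the restricted chain. -/
noncomputable def StronglyConnected {d m : ℕ} (E : Fin m → Matrix (Fin d) (Fin d) ℂ)
    (X : Submodule ℂ (EuclideanSpace ℂ (Fin d))) : Prop :=
  ∀ v ∈ X, ∀ w ∈ X, v ≠ 0 → w ≠ 0 → v ∈ ReachIn E X (outer w)


namespace Stmt11Aux
variable {d m : ℕ}
variable {d m : ℕ}

lemma toEL_apply (A : Matrix (Fin d) (Fin d) ℂ) (x : EuclideanSpace ℂ (Fin d)) :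
    Matrix.toEuclideanLin A x = A *ᵥ x := rfl

lemma matSupp_zero : matSupp (0 : Matrix (Fin d) (Fin d) ℂ) = ⊥ := by
  simp [matSupp]

lemma matSupp_smul_le (c : ℂ) (A : Matrix (Fin d) (Fin d) ℂ) :
    matSupp (c • A) ≤ matSupp A := by
  rintro y ⟨x, rfl⟩
  exact ⟨c • x, by simp [_root_.map_smul]⟩

lemma matSupp_sum_le {ι : Type*} [Fintype ι] (f : ι → Matrix (Fin d) (Fin d) ℂ) :
    matSupp (∑ i, f i) ≤ ⨆ i, matSupp (f i) := by
  rintro y ⟨x, rfl⟩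
  rw [map_sum, LinearMap.sum_apply]
  exact Submodule.sum_mem _ fun i _ => le_iSup (fun i => matSupp (f i)) i ⟨x, rfl⟩

lemma outer_mulVec (v x : EuclideanSpace ℂ (Fin d)) :
    outer v *ᵥ x = fun i => ((fun j => star (v j)) ⬝ᵥ x) * v i := by
  funext i
  simp only [mulVec, dotProduct, outer, Finset.sum_mul]
  exact Finset.sum_congr rfl fun j _ => by ring

lemma outer_isHermitian (v : EuclideanSpace ℂ (Fin d)) : (outer v).IsHermitian := by
  ext i j
  simp [outer, conjTranspose_apply, mul_comm]

lemma outer_zero : outer (0 : EuclideanSpace ℂ (Fin d)) = 0 := by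
  funext i j; simp [outer]

lemma matSupp_outer_le {X : Submodule ℂ (EuclideanSpace ℂ (Fin d))}
    {v : EuclideanSpace ℂ (Fin d)} (hv : v ∈ X) : matSupp (outer v) ≤ X := by
  rintro y ⟨x, rfl⟩
  rw [show Matrix.toEuclideanLin (outer v) x = WithLp.toLp 2 (outer v *ᵥ x) from rfl, outer_mulVec]
  exact X.smul_mem _ hv

lemma krausMap_isHermitian {E : Fin m → Matrix (Fin d) (Fin d) ℂ}
    {A : Matrix (Fin d) (Fin d) ℂ} (hA : A.IsHermitian) : (krausMap E A).IsHermitian := by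
  show _ = _
  rw [krausMap, conjTranspose_sum]
  refine Finset.sum_congr rfl fun i _ => ?_
  simp [conjTranspose_mul, Matrix.mul_assoc, hA.eq]

lemma krausMap_zero (E : Fin m → Matrix (Fin d) (Fin d) ℂ) : krausMap E 0 = 0 := by
  simp [krausMap]

lemma krausMap_smul (E : Fin m → Matrix (Fin d) (Fin d) ℂ) (c : ℂ) (A : Matrix (Fin d) (Fin d) ℂ) :
    krausMap E (c • A) = c • krausMap E A := by
  simp [krausMap, Matrix.mul_smul, Matrix.smul_mul, Finset.smul_sum]

lemma krausMap_sum {ι : Type*} [Fintype ι] (E : Fin m → Matrix (Fin d) (Fin d) ℂ)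
    (f : ι → Matrix (Fin d) (Fin d) ℂ) :
    krausMap E (∑ i, f i) = ∑ i, krausMap E (f i) := by
  unfold krausMap
  rw [Finset.sum_comm]
  exact Finset.sum_congr rfl fun i _ => by rw [Finset.mul_sum, Finset.sum_mul]

lemma toEL_projMat (X : Submodule ℂ (EuclideanSpace ℂ (Fin d))) :
    Matrix.toEuclideanLin (projMat X) = (X.subtypeL.comp X.orthogonalProjectionOnto).toLinearMap := by
  simp [projMat]

lemma projMat_mulVec_eq_self {X : Submodule ℂ (EuclideanSpace ℂ (Fin d))}
    {x : EuclideanSpace ℂ (Fin d)} (hx : x ∈ X) : projMat X *ᵥ x = x := by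
  have h : Matrix.toEuclideanLin (projMat X) x = x := by
    rw [toEL_projMat]
    show X.starProjection x = x
    exact X.starProjection_eq_self_iff.mpr hx
  rw [← toEL_apply, h]

lemma projMat_isHermitian (X : Submodule ℂ (EuclideanSpace ℂ (Fin d))) :
    (projMat X).IsHermitian := by
  rw [Matrix.isHermitian_iff_isSymmetric, toEL_projMat]
  exact X.starProjection_isSymmetric


lemma proj_mul_cancel {Y : Submodule ℂ (EuclideanSpace ℂ (Fin d))}
    {A : Matrix (Fin d) (Fin d) ℂ} (hsupp : matSupp A ≤ Y) : projMat Y * A = A := by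
  apply Matrix.toEuclideanLin.injective
  apply LinearMap.ext
  intro x
  have h1 : Matrix.toEuclideanLin A x ∈ Y := hsupp ⟨x, rfl⟩
  apply WithLp.ofLp_injective
  rw [toEL_apply, toEL_apply, ← Matrix.mulVec_mulVec]
  exact projMat_mulVec_eq_self h1

lemma mul_proj_cancel {Y : Submodule ℂ (EuclideanSpace ℂ (Fin d))}
    {A : Matrix (Fin d) (Fin d) ℂ} (hA : A.IsHermitian) (hsupp : matSupp A ≤ Y) :
    A * projMat Y = A := by
  have h : (projMat Y * A)ᴴ = A * projMat Y := by
    rw [conjTranspose_mul, hA.eq, (projMat_isHermitian Y).eq]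
  rw [← h, proj_mul_cancel hsupp, hA.eq]


lemma outer_mulVec' (v x : EuclideanSpace ℂ (Fin d)) :
    Matrix.toEuclideanLin (outer v) x = (inner ℂ v x : ℂ) • v := by
  apply WithLp.ofLp_injective
  rw [toEL_apply, outer_mulVec]
  funext i
  simp [PiLp.inner_apply, dotProduct, RCLike.inner_apply, RCLike.star_def, mul_comm]

lemma hermitian_decomp {A : Matrix (Fin d) (Fin d) ℂ} (hA : A.IsHermitian) :
    A = ∑ i, (hA.eigenvalues i : ℂ) • outer (hA.eigenvectorBasis i) := by
  apply Matrix.toEuclideanLin.injective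
  apply (hA.eigenvectorBasis).toBasis.ext
  intro j
  rw [map_sum, LinearMap.sum_apply]
  simp only [OrthonormalBasis.coe_toBasis]
  have hmv : A *ᵥ hA.eigenvectorBasis j = hA.eigenvalues j • hA.eigenvectorBasis j :=
    hA.mulVec_eigenvectorBasis j
  rw [show Matrix.toEuclideanLin A (hA.eigenvectorBasis j) = WithLp.toLp 2 (A *ᵥ hA.eigenvectorBasis j) from rfl, hmv]
  have horth : ∀ i j, (inner ℂ (hA.eigenvectorBasis i) (hA.eigenvectorBasis j) : ℂ)
      = if i = j then 1 else 0 := orthonormal_iff_ite.mp hA.eigenvectorBasis.orthonormal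
  have : ∀ i, Matrix.toEuclideanLin ((hA.eigenvalues i : ℂ) • outer (hA.eigenvectorBasis i))
      (hA.eigenvectorBasis j)
      = (hA.eigenvalues i : ℂ) • ((if i = j then (1:ℂ) else 0) • hA.eigenvectorBasis i) := by
    intro i
    rw [_root_.map_smul, LinearMap.smul_apply, outer_mulVec', horth]
  rw [Finset.sum_congr rfl fun i _ => this i]
  simp only [ite_smul, one_smul, zero_smul, smul_ite, smul_zero, Finset.sum_ite_eq',
    Finset.mem_univ, if_true]
  exact RCLike.real_smul_eq_coe_smul (K := ℂ) _ _


lemma eigenvector_mem_matSupp {A : Matrix (Fin d) (Fin d) ℂ} (hA : A.IsHermitian)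
    {i : Fin d} (hi : hA.eigenvalues i ≠ 0) : hA.eigenvectorBasis i ∈ matSupp A := by
  refine ⟨((RCLike.ofReal (K := ℂ) (hA.eigenvalues i)))⁻¹ • hA.eigenvectorBasis i, ?_⟩
  have hmv : A *ᵥ hA.eigenvectorBasis i = hA.eigenvalues i • hA.eigenvectorBasis i :=
    hA.mulVec_eigenvectorBasis i
  rw [_root_.map_smul, show Matrix.toEuclideanLin A (hA.eigenvectorBasis i) = WithLp.toLp 2 (A *ᵥ hA.eigenvectorBasis i) from rfl, hmv, WithLp.toLp_smul, WithLp.toLp_ofLp, RCLike.real_smul_eq_coe_smul (K := ℂ), smul_smul,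
    inv_mul_cancel₀ (RCLike.ofReal_ne_zero.mpr hi), one_smul]

lemma matSupp_krausMap_le {E : Fin m → Matrix (Fin d) (Fin d) ℂ}
    {X : Submodule ℂ (EuclideanSpace ℂ (Fin d))} {A : Matrix (Fin d) (Fin d) ℂ}
    (hA : A.IsHermitian) (hsupp : matSupp A ≤ X)
    (hinv : ∀ ψ ∈ X, matSupp (krausMap E (outer ψ)) ≤ X) :
    matSupp (krausMap E A) ≤ X := by
  have hdec := hermitian_decomp hA
  have h1 : krausMap E A = ∑ i, (hA.eigenvalues i : ℂ) • krausMap E (outer (hA.eigenvectorBasis i)) := by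
    conv_lhs => rw [hdec]
    rw [krausMap_sum]
    exact Finset.sum_congr rfl fun i _ => krausMap_smul E _ _
  rw [h1]
  refine le_trans (matSupp_sum_le _) (iSup_le fun i => ?_)
  by_cases hi : hA.eigenvalues i = 0
  · simp [hi, matSupp_zero]
  · exact le_trans (matSupp_smul_le _ _)
      (hinv _ (hsupp (eigenvector_mem_matSupp hA hi)))


lemma key {E : Fin m → Matrix (Fin d) (Fin d) ℂ}
    {X Y : Submodule ℂ (EuclideanSpace ℂ (Fin d))} (hXY : X ≤ Y)
    (hinv : ∀ ψ ∈ X, matSupp (krausMap E (outer ψ)) ≤ X)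
    {v : EuclideanSpace ℂ (Fin d)} (hv : v ∈ X) (n : ℕ) :
    ((krausMap E)^[n] (outer v)).IsHermitian ∧
    matSupp ((krausMap E)^[n] (outer v)) ≤ X ∧
    (restrMap E Y)^[n] (outer v) = (krausMap E)^[n] (outer v) := by
  induction n with
  | zero => exact ⟨outer_isHermitian v, matSupp_outer_le hv, rfl⟩
  | succ n ih =>
    obtain ⟨h1, h2, h3⟩ := ih
    have hH : (krausMap E ((krausMap E)^[n] (outer v))).IsHermitian := krausMap_isHermitian h1
    have hS : matSupp (krausMap E ((krausMap E)^[n] (outer v))) ≤ X :=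
      matSupp_krausMap_le h1 h2 hinv
    refine ⟨?_, ?_, ?_⟩
    · rw [Function.iterate_succ_apply']; exact hH
    · rw [Function.iterate_succ_apply']; exact hS
    · rw [Function.iterate_succ_apply', Function.iterate_succ_apply', h3]
      show projMat Y * krausMap E ((krausMap E)^[n] (outer v)) * projMat Y = _
      rw [proj_mul_cancel (hS.trans hXY), mul_proj_cancel hH (hS.trans hXY)]

lemma reachIn_eq_reach {E : Fin m → Matrix (Fin d) (Fin d) ℂ}
    {X Y : Submodule ℂ (EuclideanSpace ℂ (Fin d))} (hXY : X ≤ Y)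
    (hinv : ∀ ψ ∈ X, matSupp (krausMap E (outer ψ)) ≤ X)
    {v : EuclideanSpace ℂ (Fin d)} (hv : v ∈ X) :
    ReachIn E Y (outer v) = Reach E (outer v) :=
  iSup_congr fun n => by rw [(key hXY hinv hv n).2.2]

lemma reach_le {E : Fin m → Matrix (Fin d) (Fin d) ℂ}
    {X : Submodule ℂ (EuclideanSpace ℂ (Fin d))}
    (hinv : ∀ ψ ∈ X, matSupp (krausMap E (outer ψ)) ≤ X)
    {v : EuclideanSpace ℂ (Fin d)} (hv : v ∈ X) :
    Reach E (outer v) ≤ X :=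
  iSup_le fun n => (key (le_refl X) hinv hv n).2.1

end Stmt11Aux

open Stmt11Aux in
/-- A nonzero subspace is a BSCC (a maximal strongly connected subspace which is
invariant) iff the reachable space of every nonzero vector in it is the whole subspace. -/
theorem stmt11 {d m : ℕ} (E : Fin m → Matrix (Fin d) (Fin d) ℂ)
    (hE : ∑ i, (E i)ᴴ * E i = 1)
    (X : Submodule ℂ (EuclideanSpace ℂ (Fin d))) (hX : X ≠ ⊥) :
    (StronglyConnected E X ∧
      (∀ Y : Submodule ℂ (EuclideanSpace ℂ (Fin d)), StronglyConnected E Y → X ≤ Y → X = Y) ∧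
      (∀ ψ : EuclideanSpace ℂ (Fin d), ψ ∈ X → matSupp (krausMap E (outer ψ)) ≤ X)) ↔
    (∀ v : EuclideanSpace ℂ (Fin d), v ∈ X → v ≠ 0 → Reach E (outer v) = X) := by
  constructor
  · rintro ⟨hSC, hmax, hinv⟩ v hv hv0
    refine le_antisymm (reach_le hinv hv) ?_
    intro w hw
    by_cases hw0 : w = 0
    · subst hw0; exact Submodule.zero_mem _
    · have hmem := hSC w hw v hv hw0 hv0
      rwa [reachIn_eq_reach (le_refl X) hinv hv] at hmem
  · intro h
    have hinv : ∀ ψ ∈ X, matSupp (krausMap E (outer ψ)) ≤ X := by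
      intro ψ hψ
      by_cases hψ0 : ψ = 0
      · subst hψ0
        rw [outer_zero, krausMap_zero, matSupp_zero]
        exact bot_le
      · have h1 : matSupp ((krausMap E)^[1] (outer ψ)) ≤ Reach E (outer ψ) :=
          le_iSup (fun n => matSupp ((krausMap E)^[n] (outer ψ))) 1
        rw [Function.iterate_one, h ψ hψ hψ0] at h1
        exact h1
    refine ⟨?_, ?_, fun ψ hψ => hinv ψ hψ⟩
    · intro v hv w hw hv0 hw0
      rw [reachIn_eq_reach (le_refl X) hinv hw, h w hw hw0]
      exact hv
    · intro Y hY hXY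
      refine le_antisymm hXY ?_
      intro w hw
      obtain ⟨v, hv, hv0⟩ := (Submodule.ne_bot_iff X).mp hX
      by_cases hw0 : w = 0
      · subst hw0; exact Submodule.zero_mem _
      · have hmem := hY w hw v (hXY hv) hw0 hv0
        rwa [reachIn_eq_reach hXY hinv hv, h v hv hv0] at hmem
end

section
/- Transitivity of reachability: for density operators ρ, σ in a quantum Markov chain (H, E), if supp(ρ) ⊆ R(σ) then R(ρ) ⊆ R(σ). -/
open Matrix Filter Topology
open scoped ComplexOrder

/-! ### Auxiliary lemmas -/

section Aux

variable {d m : ℕ}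

lemma toEuclideanLin_mul (A B : Matrix (Fin d) (Fin d) ℂ) :
    Matrix.toEuclideanLin (A * B) =
      (Matrix.toEuclideanLin A) ∘ₗ (Matrix.toEuclideanLin B) := by
  ext x
  simp [Matrix.toEuclideanLin_apply, Matrix.mulVec_mulVec]

lemma orth_matSupp_conjT (M : Matrix (Fin d) (Fin d) ℂ) :
    (matSupp Mᴴ)ᗮ = LinearMap.ker (Matrix.toEuclideanLin M) := by
  ext x
  rw [Submodule.mem_orthogonal, LinearMap.mem_ker]
  constructor
  · intro hx
    have h1 : inner ℂ (Matrix.toEuclideanLin Mᴴ (Matrix.toEuclideanLin M x)) x = (0 : ℂ) :=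
      hx _ ⟨Matrix.toEuclideanLin M x, rfl⟩
    rw [Matrix.toEuclideanLin_conjTranspose_eq_adjoint, LinearMap.adjoint_inner_left] at h1
    exact inner_self_eq_zero.mp h1
  · intro hx u hu
    obtain ⟨z, rfl⟩ := hu
    rw [Matrix.toEuclideanLin_conjTranspose_eq_adjoint, LinearMap.adjoint_inner_left, hx,
      inner_zero_right]

lemma matSupp_conjT (M : Matrix (Fin d) (Fin d) ℂ) :
    matSupp Mᴴ = (LinearMap.ker (Matrix.toEuclideanLin M))ᗮ := by
  rw [← orth_matSupp_conjT, Submodule.orthogonal_orthogonal]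

lemma map_orth_ker (f : EuclideanSpace ℂ (Fin d) →ₗ[ℂ] EuclideanSpace ℂ (Fin d)) :
    Submodule.map f (LinearMap.ker f)ᗮ = LinearMap.range f := by
  have h0 : Submodule.map f (LinearMap.ker f) = ⊥ := by
    ext y
    simp only [Submodule.mem_map, LinearMap.mem_ker, Submodule.mem_bot]
    constructor
    · rintro ⟨x, hx, rfl⟩; exact hx
    · rintro rfl; exact ⟨0, by simp, by simp⟩
  have := Submodule.sup_orthogonal_of_hasOrthogonalProjection (K := LinearMap.ker f)
  calc Submodule.map f (LinearMap.ker f)ᗮ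
      = Submodule.map f (LinearMap.ker f) ⊔ Submodule.map f (LinearMap.ker f)ᗮ := by
        rw [h0, bot_sup_eq]
    _ = Submodule.map f (LinearMap.ker f ⊔ (LinearMap.ker f)ᗮ) := (Submodule.map_sup _ _ _).symm
    _ = Submodule.map f ⊤ := by rw [this]
    _ = LinearMap.range f := Submodule.map_top f

lemma matSupp_mul_conjT (M : Matrix (Fin d) (Fin d) ℂ) :
    matSupp (M * Mᴴ) = matSupp M := by
  rw [matSupp, toEuclideanLin_mul, LinearMap.range_comp, ← matSupp, matSupp_conjT,
    map_orth_ker]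
  rfl

lemma matSupp_mul_mul_conjT (F A : Matrix (Fin d) (Fin d) ℂ) (hA : A.PosSemidef) :
    matSupp (F * A * Fᴴ) = Submodule.map (Matrix.toEuclideanLin F) (matSupp A) := by
  obtain ⟨B, rfl⟩ : ∃ B : Matrix (Fin d) (Fin d) ℂ, A = Bᴴ * B := by
    open scoped MatrixOrder in exact CStarAlgebra.nonneg_iff_eq_star_mul_self.mp hA.nonneg
  have hsupp : matSupp (Bᴴ * B) = matSupp Bᴴ := by
    have := matSupp_mul_conjT Bᴴ
    rwa [Matrix.conjTranspose_conjTranspose] at this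
  have hfac : F * (Bᴴ * B) * Fᴴ = (F * Bᴴ) * (F * Bᴴ)ᴴ := by
    rw [Matrix.conjTranspose_mul, Matrix.conjTranspose_conjTranspose]
    noncomm_ring
  rw [hfac, matSupp_mul_conjT, hsupp, matSupp, toEuclideanLin_mul, LinearMap.range_comp]
  rfl

lemma ker_conjT_mul_self (B : Matrix (Fin d) (Fin d) ℂ) :
    LinearMap.ker (Matrix.toEuclideanLin (Bᴴ * B)) =
      LinearMap.ker (Matrix.toEuclideanLin B) := by
  ext x
  simp only [LinearMap.mem_ker, toEuclideanLin_mul, LinearMap.comp_apply]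
  constructor
  · intro hx
    have h1 : inner ℂ x (Matrix.toEuclideanLin Bᴴ (Matrix.toEuclideanLin B x)) = (0 : ℂ) := by
      rw [hx, inner_zero_right]
    rw [Matrix.toEuclideanLin_conjTranspose_eq_adjoint, LinearMap.adjoint_inner_right] at h1
    exact inner_self_eq_zero.mp h1
  · intro hx
    rw [hx, map_zero]

lemma inner_toEuclideanLin_conjT_mul_self (B : Matrix (Fin d) (Fin d) ℂ)
    (x : EuclideanSpace ℂ (Fin d)) :
    inner ℂ x (Matrix.toEuclideanLin (Bᴴ * B) x) =
      ((‖Matrix.toEuclideanLin B x‖ : ℝ) ^ 2 : ℂ) := by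
  rw [toEuclideanLin_mul, LinearMap.comp_apply, Matrix.toEuclideanLin_conjTranspose_eq_adjoint,
    LinearMap.adjoint_inner_right, inner_self_eq_norm_sq_to_K]
  norm_cast

lemma matSupp_psd (A : Matrix (Fin d) (Fin d) ℂ) (hA : A.PosSemidef) :
    matSupp A = (LinearMap.ker (Matrix.toEuclideanLin A))ᗮ := by
  conv_lhs => rw [← hA.1.eq]
  rw [matSupp_conjT]

lemma orth_inf (K L : Submodule ℂ (EuclideanSpace ℂ (Fin d))) :
    (K ⊓ L)ᗮ = Kᗮ ⊔ Lᗮ := by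
  have h := Submodule.inf_orthogonal Kᗮ Lᗮ
  rw [Submodule.orthogonal_orthogonal, Submodule.orthogonal_orthogonal] at h
  rw [h, Submodule.orthogonal_orthogonal]

lemma matSupp_add {A B : Matrix (Fin d) (Fin d) ℂ} (hA : A.PosSemidef) (hB : B.PosSemidef) :
    matSupp (A + B) = matSupp A ⊔ matSupp B := by
  obtain ⟨C, rfl⟩ : ∃ C : Matrix (Fin d) (Fin d) ℂ, A = Cᴴ * C := by
    open scoped MatrixOrder in exact CStarAlgebra.nonneg_iff_eq_star_mul_self.mp hA.nonneg
  obtain ⟨D, rfl⟩ : ∃ D : Matrix (Fin d) (Fin d) ℂ, B = Dᴴ * D := by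
    open scoped MatrixOrder in exact CStarAlgebra.nonneg_iff_eq_star_mul_self.mp hB.nonneg
  have hker : LinearMap.ker (Matrix.toEuclideanLin (Cᴴ * C + Dᴴ * D)) =
      LinearMap.ker (Matrix.toEuclideanLin (Cᴴ * C)) ⊓
        LinearMap.ker (Matrix.toEuclideanLin (Dᴴ * D)) := by
    ext x
    simp only [LinearMap.mem_ker, Submodule.mem_inf, map_add, LinearMap.add_apply]
    constructor
    · intro hx
      have hi : inner ℂ x (Matrix.toEuclideanLin (Cᴴ * C) x + Matrix.toEuclideanLin (Dᴴ * D) x)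
          = (0 : ℂ) := by rw [hx]; exact inner_zero_right x
      rw [inner_add_right, inner_toEuclideanLin_conjT_mul_self,
        inner_toEuclideanLin_conjT_mul_self] at hi
      have hre : ‖Matrix.toEuclideanLin C x‖ ^ 2 + ‖Matrix.toEuclideanLin D x‖ ^ 2
          = (0 : ℝ) := by exact_mod_cast hi
      have hC2 : ‖Matrix.toEuclideanLin C x‖ ^ 2 = 0 :=
        le_antisymm (by nlinarith [sq_nonneg ‖Matrix.toEuclideanLin D x‖]) (sq_nonneg _)
      have hD2 : ‖Matrix.toEuclideanLin D x‖ ^ 2 = 0 :=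
        le_antisymm (by nlinarith [sq_nonneg ‖Matrix.toEuclideanLin C x‖]) (sq_nonneg _)
      have hC : Matrix.toEuclideanLin C x = 0 :=
        norm_eq_zero.mp (pow_eq_zero_iff two_ne_zero |>.mp hC2)
      have hD : Matrix.toEuclideanLin D x = 0 :=
        norm_eq_zero.mp (pow_eq_zero_iff two_ne_zero |>.mp hD2)
      constructor
      · rw [toEuclideanLin_mul, LinearMap.comp_apply, hC, map_zero]
      · rw [toEuclideanLin_mul, LinearMap.comp_apply, hD, map_zero]
    · rintro ⟨h1, h2⟩
      rw [h1, h2, add_zero]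
  rw [matSupp_psd _ (hA.add hB), hker, orth_inf, ← matSupp_psd _ hA, ← matSupp_psd _ hB]

lemma matSupp_zero : matSupp (0 : Matrix (Fin d) (Fin d) ℂ) = ⊥ := by
  rw [matSupp, map_zero, LinearMap.range_zero]

lemma psd_sum {ι : Type*} (s : Finset ι) (f : ι → Matrix (Fin d) (Fin d) ℂ)
    (h : ∀ i ∈ s, (f i).PosSemidef) : (∑ i ∈ s, f i).PosSemidef :=
  Finset.sum_induction f _ (fun _ _ ha hb => ha.add hb) Matrix.PosSemidef.zero h

lemma matSupp_sum {ι : Type*} (s : Finset ι) (f : ι → Matrix (Fin d) (Fin d) ℂ)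
    (h : ∀ i ∈ s, (f i).PosSemidef) :
    matSupp (∑ i ∈ s, f i) = s.sup fun i => matSupp (f i) := by
  induction s using Finset.cons_induction with
  | empty => simpa using matSupp_zero
  | cons a s ha ih =>
    rw [Finset.sum_cons, Finset.sup_cons,
      matSupp_add (h a (Finset.mem_cons_self a s)) (psd_sum s f fun i hi =>
        h i (Finset.mem_cons_of_mem hi)),
      ih fun i hi => h i (Finset.mem_cons_of_mem hi)]

lemma krausMap_psd (E : Fin m → Matrix (Fin d) (Fin d) ℂ) {A : Matrix (Fin d) (Fin d) ℂ}
    (hA : A.PosSemidef) : (krausMap E A).PosSemidef :=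
  psd_sum _ _ fun i _ => hA.mul_mul_conjTranspose_same (E i)

lemma krausMap_zero (E : Fin m → Matrix (Fin d) (Fin d) ℂ) : krausMap E 0 = 0 := by
  simp [krausMap]

lemma krausMap_add (E : Fin m → Matrix (Fin d) (Fin d) ℂ) (A B : Matrix (Fin d) (Fin d) ℂ) :
    krausMap E (A + B) = krausMap E A + krausMap E B := by
  simp [krausMap, mul_add, add_mul, Finset.sum_add_distrib]

lemma krausMap_sum {ι : Type*} (E : Fin m → Matrix (Fin d) (Fin d) ℂ) (s : Finset ι)
    (f : ι → Matrix (Fin d) (Fin d) ℂ) :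
    krausMap E (∑ i ∈ s, f i) = ∑ i ∈ s, krausMap E (f i) := by
  induction s using Finset.cons_induction with
  | empty => simpa using krausMap_zero E
  | cons a s ha ih => rw [Finset.sum_cons, krausMap_add, ih, Finset.sum_cons]

lemma matSupp_krausMap (E : Fin m → Matrix (Fin d) (Fin d) ℂ) {A : Matrix (Fin d) (Fin d) ℂ}
    (hA : A.PosSemidef) :
    matSupp (krausMap E A) =
      Finset.univ.sup fun i => Submodule.map (Matrix.toEuclideanLin (E i)) (matSupp A) := by
  rw [krausMap, matSupp_sum _ _ fun i _ => hA.mul_mul_conjTranspose_same (E i)]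
  exact Finset.sup_congr rfl fun i _ => matSupp_mul_mul_conjT (E i) A hA

lemma matSupp_krausMap_mono (E : Fin m → Matrix (Fin d) (Fin d) ℂ)
    {A B : Matrix (Fin d) (Fin d) ℂ} (hA : A.PosSemidef) (hB : B.PosSemidef)
    (h : matSupp A ≤ matSupp B) : matSupp (krausMap E A) ≤ matSupp (krausMap E B) := by
  rw [matSupp_krausMap E hA, matSupp_krausMap E hB]
  exact Finset.sup_mono_fun fun i _ => Submodule.map_mono h

lemma iterate_psd (E : Fin m → Matrix (Fin d) (Fin d) ℂ) {A : Matrix (Fin d) (Fin d) ℂ}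
    (hA : A.PosSemidef) (n : ℕ) : ((krausMap E)^[n] A).PosSemidef := by
  induction n with
  | zero => exact hA
  | succ n ih => rw [Function.iterate_succ_apply']; exact krausMap_psd E ih

end Aux

/-- Transitivity of reachability. -/
theorem stmt13 {d m : ℕ} (E : Fin m → Matrix (Fin d) (Fin d) ℂ)
    (hE : ∑ i, (E i)ᴴ * E i = 1)
    (ρ σ : Matrix (Fin d) (Fin d) ℂ) (hρ : ρ.PosSemidef) (hρtr : ρ.trace = 1)
    (hσ : σ.PosSemidef) (hσtr : σ.trace = 1)
    (h : matSupp ρ ≤ Reach E σ) :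
    Reach E ρ ≤ Reach E σ := by
  classical
  set Φ := krausMap E with hΦ
  set g : ℕ → Submodule ℂ (EuclideanSpace ℂ (Fin d)) := fun n => matSupp (Φ^[n] σ) with hg
  -- the increasing sequence of partial sups of `g` stabilizes
  obtain ⟨N, hN⟩ := monotone_stabilizes_iff_noetherian.mpr inferInstance (partialSups g)
  set τ : Matrix (Fin d) (Fin d) ℂ := ∑ n ∈ Finset.range (N + 1), Φ^[n] σ with hτ
  have hτpsd : τ.PosSemidef := psd_sum _ _ fun n _ => iterate_psd E hσ n
  have hτsupp : matSupp τ = partialSups g N := by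
    rw [hτ, matSupp_sum _ _ fun n _ => iterate_psd E hσ n, partialSups_eq_sup_range]
  have hReach : Reach E σ = matSupp τ := by
    rw [hτsupp]
    apply le_antisymm
    · apply iSup_le
      intro n
      calc g n ≤ partialSups g (max n N) := le_partialSups_of_le g (le_max_left n N)
        _ = partialSups g N := (hN (max n N) (le_max_right n N)).symm
    · exact partialSups_le g N _ fun k _ => le_iSup g k
  -- key invariance step
  have key : ∀ A : Matrix (Fin d) (Fin d) ℂ, A.PosSemidef → matSupp A ≤ Reach E σ →
      matSupp (Φ A) ≤ Reach E σ := by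
    intro A hApsd hA
    have h1 : matSupp (Φ A) ≤ matSupp (Φ τ) :=
      matSupp_krausMap_mono E hApsd hτpsd (hReach ▸ hA)
    have h2 : Φ τ = ∑ n ∈ Finset.range (N + 1), Φ^[n + 1] σ := by
      rw [hτ, hΦ, krausMap_sum]
      exact Finset.sum_congr rfl fun n _ => (Function.iterate_succ_apply' Φ n σ).symm
    have h3 : matSupp (Φ τ) ≤ Reach E σ := by
      rw [h2, matSupp_sum _ _ fun n _ => iterate_psd E hσ (n + 1)]
      exact Finset.sup_le fun n _ => le_iSup g (n + 1)
    exact h1.trans h3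
  -- conclude by induction on iterates
  show (⨆ n : ℕ, matSupp (Φ^[n] ρ)) ≤ Reach E σ
  apply iSup_le
  intro n
  induction n with
  | zero => exact h
  | succ n ih =>
    rw [Function.iterate_succ_apply']
    exact key _ (iterate_psd E hρ n) ih
end
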